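/- arXiv:1412.1050 — 5 statements merged into one kernel-verified Lean document; each statement's English description precedes it below -/
import Mathlib

section
/- If μ is a signed Borel measure on ℝ with support bounded below, distribution function satisfying 0 ≤ μ(x) ≤ 1, and additionally lim_{y→∞} (1/y)∫_{-∞}^{y} μ(x) dx = 1, then lim_{x→0^+} ∫_{-∞}^{∞} x e^{-λx} μ(λ) dλ = 1, i.e. f_μ(0^+) = 1. -/
set_option maxHeartbeats 1000000


open MeasureTheory Set Filter

private lemma measurable_distrib (μ : MeasureTheory.SignedMeasure ℝ) :
    Measurable fun l : ℝ => μ (Set.Iic l) := by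
  have key : ∀ l : ℝ, μ (Set.Iic l) =
      (μ.toJordanDecomposition.posPart (Set.Iic l)).toReal
        - (μ.toJordanDecomposition.negPart (Set.Iic l)).toReal := by
    intro l
    conv_lhs => rw [← μ.toSignedMeasure_toJordanDecomposition]
    rw [MeasureTheory.JordanDecomposition.toSignedMeasure,
      MeasureTheory.VectorMeasure.sub_apply,
      MeasureTheory.Measure.toSignedMeasure_apply_measurable measurableSet_Iic,
      MeasureTheory.Measure.toSignedMeasure_apply_measurable measurableSet_Iic]
    rfl
  simp_rw [key]
  have mono : ∀ (ν : Measure ℝ) [IsFiniteMeasure ν],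
      Measurable fun l : ℝ => (ν (Iic l)).toReal := by
    intro ν hν
    exact Monotone.measurable (fun u v huv => ENNReal.toReal_mono (measure_ne_top ν _)
      (measure_mono (Iic_subset_Iic.2 huv)))
  exact (mono _).sub (mono _)

/-- If `μ` is a signed Borel measure on `ℝ` with support contained in
`(a,∞)`, distribution function `μ(x) = μ((-∞,x]) ∈ [0,1]`, and average value condition
`lim_{y→∞} y⁻¹ ∫_{-∞}^y μ(x) dx = 1`, then
`lim_{x→0⁺} ∫ x e^{-λx} μ(λ) dλ = 1`, i.e. `f_μ(0⁺) = 1`. -/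
theorem stmt1 (μ : MeasureTheory.SignedMeasure ℝ) (a : ℝ)
    (hsupp : ∀ s : Set ℝ, MeasurableSet s → s ⊆ Set.Iic a → μ s = 0)
    (hdist : ∀ x : ℝ, 0 ≤ μ (Set.Iic x) ∧ μ (Set.Iic x) ≤ 1)
    (hH3 : Filter.Tendsto (fun y : ℝ => (1 / y) * ∫ x in Set.Iic y, μ (Set.Iic x))
      Filter.atTop (nhds 1)) :
    Filter.Tendsto (fun x : ℝ => ∫ lam : ℝ, x * Real.exp (-lam * x) * μ (Set.Iic lam))
      (nhdsWithin 0 (Set.Ioi 0)) (nhds 1) := by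
  set F : ℝ → ℝ := fun l => μ (Set.Iic l) with hFdef
  have hFmeas : Measurable F := measurable_distrib μ
  have hF0 : ∀ l : ℝ, l ≤ a → F l = 0 := fun l hl =>
    hsupp _ measurableSet_Iic (Iic_subset_Iic.mpr hl)
  have hFnn : ∀ l, 0 ≤ F l := fun l => (hdist l).1
  have hF1 : ∀ l, F l ≤ 1 := fun l => (hdist l).2
  -- F is integrable on every lower ray
  have hFint : ∀ y : ℝ, IntegrableOn F (Iic y) := by
    intro y
    apply Integrable.mono' (g := (Icc a y).indicator (fun _ => (1 : ℝ)))
    · exact (integrable_indicator_iff measurableSet_Icc).mpr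
        (integrableOn_const measure_Icc_lt_top.ne)
    · exact hFmeas.aestronglyMeasurable.restrict
    · refine (ae_restrict_iff' measurableSet_Iic).2 (ae_of_all _ fun l hl => ?_)
      rw [Real.norm_eq_abs, abs_of_nonneg (hFnn l)]
      rcases le_or_gt l a with h | h
      · rw [hF0 l h]
        exact Set.indicator_nonneg (fun _ _ => zero_le_one) l
      · rw [Set.indicator_of_mem (Set.mem_Icc.mpr ⟨h.le, hl⟩)]
        exact hF1 l
  set G : ℝ → ℝ := fun y => ∫ l in Iic y, F l with hGdef
  have hGnn : ∀ y, 0 ≤ G y := fun y => setIntegral_nonneg measurableSet_Iic fun l _ => hFnn l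
  have hG0 : ∀ y : ℝ, y ≤ a → G y = 0 := by
    intro y hy
    show (∫ l in Iic y, F l) = 0
    rw [setIntegral_congr_fun measurableSet_Iic
      (g := fun _ => (0 : ℝ)) (fun l hl => hF0 l (le_trans hl hy))]
    simp
  have hGle : ∀ y : ℝ, G y ≤ max (y - a) 0 := by
    intro y
    rcases le_or_gt y a with h | h
    · rw [hG0 y h]; exact le_max_right _ _
    · have hsplit : G y = (∫ l in Iic a, F l) + ∫ l in Ioc a y, F l := by
        show (∫ l in Iic y, F l) = (∫ l in Iic a, F l) + ∫ l in Ioc a y, F l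
        rw [← Iic_union_Ioc_eq_Iic h.le,
          setIntegral_union (Iic_disjoint_Ioc le_rfl) measurableSet_Ioc (hFint a)
            ((hFint y).mono_set Ioc_subset_Iic_self)]
      have h1 : (∫ l in Iic a, F l) = 0 := hG0 a le_rfl
      have h2 : (∫ l in Ioc a y, F l) ≤ ∫ _ in Ioc a y, (1 : ℝ) := by
        refine setIntegral_mono_on ((hFint y).mono_set Ioc_subset_Iic_self)
          (integrableOn_const measure_Ioc_lt_top.ne) measurableSet_Ioc
          (fun l _ => hF1 l)
      have h3 : (∫ _ in Ioc a y, (1 : ℝ)) = y - a := by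
        simp [Real.volume_Ioc, ENNReal.toReal_ofReal (sub_nonneg.mpr h.le), h.le]
      rw [hsplit, h1, zero_add]
      exact le_trans (h2.trans_eq h3) (le_max_left _ _)
  have hGmono : Monotone G := by
    intro u v huv
    exact setIntegral_mono_set (hFint v) (ae_of_all _ hFnn)
      (HasSubset.Subset.eventuallyLE (Iic_subset_Iic.2 huv))
  have hGmeas : Measurable G := hGmono.measurable
  have hH3' : Tendsto (fun y : ℝ => (1 / y) * G y) atTop (nhds 1) := hH3
  -- Key identity, by Fubini
  have key : ∀ x : ℝ, 0 < x →
      (∫ lam : ℝ, x * Real.exp (-lam * x) * F lam)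
        = ∫ t : ℝ, Real.exp (-t) * (x * G (t / x)) := by
    intro x hx
    set f : ℝ → ℝ → ℝ := fun l t =>
      (x * F l) * ({p : ℝ × ℝ | p.1 * x ≤ p.2}.indicator (fun p => Real.exp (-p.2)) (l, t))
      with hfdef
    have hmeasSet : MeasurableSet {p : ℝ × ℝ | p.1 * x ≤ p.2} :=
      measurableSet_le (measurable_fst.mul_const x) measurable_snd
    have hfunc : Measurable (Function.uncurry f) := by
      exact (measurable_const.mul (hFmeas.comp measurable_fst)).mul
        ((measurable_snd.neg.exp).indicator hmeasSet)
    have h1 : ∀ l t : ℝ, f l t =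
        (x * F l) * (Ici (l * x)).indicator (fun s => Real.exp (-s)) t := by
      intro l t
      simp [hfdef, Set.indicator_apply, Set.mem_setOf_eq, Set.mem_Ici]
    have h2 : ∀ l t : ℝ, f l t =
        (Iic (t / x)).indicator (fun l => (x * F l) * Real.exp (-t)) l := by
      intro l t
      have : l * x ≤ t ↔ l ≤ t / x := (le_div_iff₀ hx).symm
      simp [hfdef, Set.indicator_apply, Set.mem_setOf_eq, Set.mem_Iic, this]
    have hexp_int : ∀ c : ℝ, IntegrableOn (fun t : ℝ => Real.exp (-t)) (Ici c) := by
      intro c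
      rw [integrableOn_Ici_iff_integrableOn_Ioi]
      simpa [neg_one_mul] using exp_neg_integrableOn_Ioi c one_pos
    have hslice : ∀ l : ℝ, Integrable (f l) := by
      intro l
      have : Integrable ((Ici (l * x)).indicator (fun s => Real.exp (-s))) :=
        (hexp_int (l * x)).integrable_indicator measurableSet_Ici
      exact (funext (h1 l) : f l = _) ▸ this.const_mul _
    have hIci : ∀ c : ℝ, (∫ t in Ici c, Real.exp (-t)) = Real.exp (-c) := by
      intro c
      rw [MeasureTheory.integral_Ici_eq_integral_Ioi]
      exact integral_exp_neg_Ioi c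
    have hinner : ∀ l : ℝ, (∫ t : ℝ, f l t) = (x * F l) * Real.exp (-(l * x)) := by
      intro l
      simp_rw [h1 l]
      rw [MeasureTheory.integral_const_mul, integral_indicator measurableSet_Ici, hIci]
    have hnn : ∀ l t : ℝ, 0 ≤ f l t := by
      intro l t
      rw [h1]
      exact mul_nonneg (mul_nonneg hx.le (hFnn l))
        (Set.indicator_nonneg (fun s _ => (Real.exp_pos _).le) t)
    have hFlint : Integrable (fun l : ℝ => (x * F l) * Real.exp (-(l * x))) := by
      apply Integrable.mono' (g := (Ici a).indicator (fun l => x * Real.exp (-(l * x))))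
      · have h0 : IntegrableOn (fun t : ℝ => x * Real.exp (-x * t)) (Ioi a) :=
          (exp_neg_integrableOn_Ioi a hx).const_mul x
        have h0' : IntegrableOn (fun l : ℝ => x * Real.exp (-(l * x))) (Ici a) := by
          rw [integrableOn_Ici_iff_integrableOn_Ioi]
          exact h0.congr_fun (fun l _ => by dsimp only; rw [mul_comm l x, neg_mul]) measurableSet_Ioi
        exact h0'.integrable_indicator measurableSet_Ici
      · exact ((measurable_const.mul hFmeas).mul
          ((measurable_id.mul_const x).neg.exp)).aestronglyMeasurable
      · refine ae_of_all _ fun l => ?_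
        rw [Real.norm_eq_abs, abs_of_nonneg (mul_nonneg (mul_nonneg hx.le (hFnn l))
          (Real.exp_pos _).le)]
        rcases le_or_gt l a with h | h
        · rw [hF0 l h]
          simpa using Set.indicator_nonneg
            (fun s (_ : s ∈ Ici a) => (mul_nonneg hx.le (Real.exp_pos (-(s * x))).le)) l
        · rw [Set.indicator_of_mem (Set.mem_Ici.mpr h.le)]
          have := mul_le_mul_of_nonneg_right
            (mul_le_mul_of_nonneg_left (hF1 l) hx.le) (Real.exp_pos (-(l * x))).le
          simpa using this
    have huncint : Integrable (Function.uncurry f) (volume.prod volume) := by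
      rw [MeasureTheory.integrable_prod_iff hfunc.aestronglyMeasurable]
      constructor
      · exact ae_of_all _ hslice
      · apply hFlint.congr
        refine ae_of_all _ fun l => ?_
        show x * F l * Real.exp (-(l * x)) = ∫ t : ℝ, ‖f l t‖
        rw [← hinner l]
        refine (integral_congr_ae (ae_of_all _ fun t => ?_))
        show f l t = ‖f l t‖
        rw [Real.norm_eq_abs, abs_of_nonneg (hnn l t)]
    have hswap := MeasureTheory.integral_integral_swap huncint
    have hLHS : (∫ l : ℝ, ∫ t : ℝ, f l t) = ∫ lam : ℝ, x * Real.exp (-lam * x) * F lam := by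
      refine integral_congr_ae (ae_of_all _ fun l => ?_)
      show (∫ t : ℝ, f l t) = x * Real.exp (-l * x) * F l
      rw [hinner l]
      ring_nf
    have hRHS : (∫ t : ℝ, ∫ l : ℝ, f l t) = ∫ t : ℝ, Real.exp (-t) * (x * G (t / x)) := by
      refine integral_congr_ae (ae_of_all _ fun t => ?_)
      show (∫ l : ℝ, f l t) = Real.exp (-t) * (x * G (t / x))
      simp_rw [h2]
      rw [integral_indicator measurableSet_Iic, MeasureTheory.integral_mul_const,
        MeasureTheory.integral_const_mul]
      ring
    rw [← hLHS, ← hRHS, hswap]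
  -- value of the limit integral
  have h1int : (∫ t : ℝ, Real.exp (-t) * max t 0) = 1 := by
    have heq : (fun t : ℝ => Real.exp (-t) * max t 0)
        = (Ioi (0 : ℝ)).indicator (fun t => Real.exp (-t) * t) := by
      funext t
      rcases le_or_gt t 0 with h | h
      · simp [max_eq_right h, Set.indicator_of_notMem (notMem_Ioi.mpr h)]
      · rw [Set.indicator_of_mem (Set.mem_Ioi.mpr h), max_eq_left h.le]
    rw [heq, integral_indicator measurableSet_Ioi]
    have hg := Real.Gamma_eq_integral (by norm_num : (0:ℝ) < 2)
    rw [Real.Gamma_two] at hg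
    norm_num at hg
    rw [← hg]
  -- dominated convergence
  have hdct : Tendsto (fun x : ℝ => ∫ t : ℝ, Real.exp (-t) * (x * G (t / x)))
      (nhdsWithin 0 (Set.Ioi 0)) (nhds (∫ t : ℝ, Real.exp (-t) * max t 0)) := by
    apply MeasureTheory.tendsto_integral_filter_of_dominated_convergence
      (bound := (Ici (-|a|)).indicator (fun t => Real.exp (-t) * (|t| + |a|)))
    · refine Filter.Eventually.of_forall fun x => ?_
      exact ((measurable_id.neg.exp).mul
        (measurable_const.mul (hGmeas.comp (measurable_id.div_const x)))).aestronglyMeasurable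
    · filter_upwards [Ioc_mem_nhdsGT_of_mem (by norm_num : (0:ℝ) ∈ Ico (0:ℝ) 1)] with x hx
      refine ae_of_all _ fun t => ?_
      show ‖Real.exp (-t) * (x * G (t / x))‖ ≤
        (Ici (-|a|)).indicator (fun t => Real.exp (-t) * (|t| + |a|)) t
      obtain ⟨hx0, hx1⟩ := hx
      rw [Real.norm_eq_abs, abs_of_nonneg (mul_nonneg (Real.exp_pos _).le
        (mul_nonneg hx0.le (hGnn _)))]
      have hax : -|a| ≤ a * x := by nlinarith [abs_nonneg a, neg_abs_le a, le_abs_self a]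
      rcases lt_or_ge t (-|a|) with h | h
      · have htax : t / x ≤ a := (div_le_iff₀ hx0).mpr (by nlinarith)
        rw [hG0 _ htax]
        simpa using Set.indicator_nonneg
          (fun s (_ : s ∈ Ici (-|a|)) =>
            mul_nonneg (Real.exp_pos (-s)).le (by positivity)) t
      · rw [Set.indicator_of_mem (Set.mem_Ici.mpr h)]
        have hb : x * G (t / x) ≤ |t| + |a| := by
          have h1 : x * G (t / x) ≤ x * max (t / x - a) 0 :=
            mul_le_mul_of_nonneg_left (hGle _) hx0.le
          have h2 : x * max (t / x - a) 0 = max (t - a * x) 0 := by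
            rw [mul_max_of_nonneg _ _ hx0.le, mul_zero]
            congr 1
            field_simp
          have h3 : max (t - a * x) 0 ≤ |t| + |a| := by
            apply max_le
            · nlinarith [le_abs_self t, abs_nonneg a]
            · positivity
          linarith
        exact mul_le_mul_of_nonneg_left hb (Real.exp_pos _).le
    · -- integrability of the bound
      refine ((?_ : IntegrableOn (fun t : ℝ => Real.exp (-t) * (|t| + |a|))
        (Ici (-|a|))).integrable_indicator measurableSet_Ici)
      rw [← Icc_union_Ioi_eq_Ici (neg_nonpos.mpr (abs_nonneg a)), integrableOn_union]
      constructor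
      · exact (Continuous.integrableOn_Icc (by continuity))
      · have h_t : IntegrableOn (fun t : ℝ => Real.exp (-t) * t) (Ioi 0) := by
          have := Real.GammaIntegral_convergent (by norm_num : (0:ℝ) < 2)
          norm_num at this
          exact this
        have h_c : IntegrableOn (fun t : ℝ => Real.exp (-t) * |a|) (Ioi 0) := by
          refine Integrable.mul_const ?_ _
          exact (by simpa [neg_one_mul] using exp_neg_integrableOn_Ioi 0 one_pos :
            IntegrableOn (fun t : ℝ => Real.exp (-t)) (Ioi 0))
        refine MeasureTheory.IntegrableOn.congr_fun (h_t.add h_c) (fun t ht => ?_)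
          measurableSet_Ioi
        have habs : |t| = t := abs_of_pos ht
        simp only [Pi.add_apply]
        rw [habs]; ring
    · -- pointwise a.e. limit
      have hne : ∀ᵐ t : ℝ, t ≠ 0 := by
        rw [MeasureTheory.ae_iff]
        have hset : {t : ℝ | ¬ t ≠ 0} = {0} := by ext t; simp
        rw [hset]
        exact measure_singleton 0
      refine hne.mono fun t ht => ?_
      rcases ht.lt_or_gt with h | h
      · -- t < 0 : eventually zero
        have hpos : 0 < -t / (|a| + 1) := div_pos (neg_pos.mpr h) (by positivity)
        refine Tendsto.congr'
          (f₁ := fun _ : ℝ => (0:ℝ)) ?_ (by simpa [max_eq_right h.le] using tendsto_const_nhds)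
        filter_upwards [Ioo_mem_nhdsGT_of_mem (⟨le_rfl, hpos⟩ : (0:ℝ) ∈ Ico 0 (-t / (|a| + 1)))]
          with x hx
        obtain ⟨hx0, hx2⟩ := hx
        show (0:ℝ) = Real.exp (-t) * (x * G (t / x))
        have hxa : x * (|a| + 1) < -t := by
          rw [lt_div_iff₀ (by positivity : (0:ℝ) < |a| + 1)] at hx2
          linarith
        have htax : t / x ≤ a := by
          rw [div_le_iff₀ hx0]
          nlinarith [neg_abs_le a, abs_nonneg a]
        rw [hG0 _ htax]
        ring
      · -- t > 0
        have hty : Tendsto (fun x : ℝ => t / x) (nhdsWithin 0 (Ioi 0)) atTop := by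
          simpa [div_eq_mul_inv] using Filter.Tendsto.const_mul_atTop h tendsto_inv_nhdsGT_zero
        have hcomp := hH3'.comp hty
        have hmul := hcomp.const_mul t
        rw [mul_one] at hmul
        have heq : Tendsto (fun x : ℝ => x * G (t / x)) (nhdsWithin 0 (Ioi 0)) (nhds t) := by
          refine Tendsto.congr' ?_ hmul
          filter_upwards [self_mem_nhdsWithin] with x hx
          have hx0 : (0:ℝ) < x := hx
          have ht0 : t ≠ 0 := ne_of_gt h
          simp only [Function.comp]
          show t * (1 / (t / x) * G (t / x)) = x * G (t / x)
          field_simp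
        have := heq.const_mul (Real.exp (-t))
        simpa [max_eq_left h.le] using this
  rw [h1int] at hdct
  refine hdct.congr' ?_
  filter_upwards [self_mem_nhdsWithin] with x hx
  show (∫ t : ℝ, Real.exp (-t) * (x * G (t / x)))
      = ∫ lam : ℝ, x * Real.exp (-lam * x) * F lam
  exact (key x hx).symm
end

section
/- Let P be a polynomial of exact degree n+1 with no zeros on the unit circle satisfying |P*(z)| < |P(z)| for all |z| < 1, where P*(z) = z^{n+1} conj(P(1/z̄)). Then the companion polynomials 𝒜 = (P + P*)/2 and ℬ = i(P − P*)/2 both have exact degree n+1 and all of their zeros lie on the unit circle. -/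
open Polynomial

private lemma rev_eval (f : Polynomial ℂ) (z : ℂ) (hz : z ≠ 0) :
    f.reverse.eval z = z ^ f.natDegree * f.eval z⁻¹ := by
  have : Invertible z⁻¹ := invertibleOfNonzero (inv_ne_zero hz)
  have h := Polynomial.eval₂_reverse_mul_pow (RingHom.id ℂ) z⁻¹ f
  rw [invOf_eq_inv, inv_inv] at h
  simp only [Polynomial.eval₂_eq_eval_map, Polynomial.map_id] at h
  field_simp at h ⊢
  rw [← h, mul_assoc, ← mul_pow, one_div_mul_cancel hz, one_pow, mul_one]

private lemma conj_eval (f : Polynomial ℂ) (w : ℂ) :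
    (f.map (starRingEnd ℂ)).eval w = (starRingEnd ℂ) (f.eval ((starRingEnd ℂ) w)) := by
  rw [Polynomial.eval_map, show f.eval ((starRingEnd ℂ) w) = f.eval₂ (RingHom.id ℂ) ((starRingEnd ℂ) w) by simp [Polynomial.eval₂_eq_eval_map],
    Polynomial.hom_eval₂]
  simp

/-- Let `P` be a polynomial of exact degree `n+1` with no zeros on the
unit circle satisfying `|P*(z)| < |P(z)|` for all `|z| < 1`, where
`P*(z) = z^{n+1} conj(P(1/z̄))` (i.e. the conjugate-reversed polynomial).  Then the
companion polynomials `𝒜 = (P + P*)/2` and `ℬ = i(P - P*)/2` both have exact degree `n+1`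
and all of their zeros lie on the unit circle. -/
theorem stmt10 (n : ℕ) (P : Polynomial ℂ)
    (hdeg : P.natDegree = n + 1)
    (hcirc : ∀ z : ℂ, ‖z‖ = 1 → P.eval z ≠ 0)
    (hin : ∀ z : ℂ, ‖z‖ < 1 →
      ‖((P.map (starRingEnd ℂ)).reverse).eval z‖ < ‖P.eval z‖) :
    let Pstar := (P.map (starRingEnd ℂ)).reverse
    let A := Polynomial.C (1 / 2 : ℂ) * (P + Pstar)
    let B := Polynomial.C (Complex.I / 2) * (P - Pstar)
    A.natDegree = n + 1 ∧ B.natDegree = n + 1 ∧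
      (∀ z : ℂ, A.eval z = 0 → ‖z‖ = 1) ∧ (∀ z : ℂ, B.eval z = 0 → ‖z‖ = 1) := by
  intro Pstar A B
  set Q : Polynomial ℂ := P.map (starRingEnd ℂ) with hQ
  have hQdeg : Q.natDegree = n + 1 := by
    rw [hQ, Polynomial.natDegree_map, hdeg]
  -- coefficient facts
  have hPs0 : Pstar.coeff 0 = (starRingEnd ℂ) (P.coeff (n + 1)) := by
    show Q.reverse.coeff 0 = _
    rw [Polynomial.coeff_zero_reverse, Polynomial.leadingCoeff, hQdeg, hQ,
      Polynomial.coeff_map]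
  have hPsTop : Pstar.coeff (n + 1) = (starRingEnd ℂ) (P.coeff 0) := by
    show Q.reverse.coeff (n + 1) = _
    rw [Polynomial.coeff_reverse, hQdeg, Polynomial.revAt_le (le_refl (n + 1)),
      Nat.sub_self, hQ, Polynomial.coeff_map]
  -- from hin at 0 : ‖P.coeff (n+1)‖ < ‖P.coeff 0‖
  have h0 : ‖P.coeff (n + 1)‖ < ‖P.coeff 0‖ := by
    have := hin 0 (by norm_num)
    rwa [← Polynomial.coeff_zero_eq_eval_zero, ← Polynomial.coeff_zero_eq_eval_zero,
      hPs0, RCLike.norm_conj] at this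
  -- outer inequality : for ‖z‖ > 1, ‖P.eval z‖ < ‖Pstar.eval z‖
  have hout : ∀ z : ℂ, 1 < ‖z‖ → ‖P.eval z‖ < ‖Pstar.eval z‖ := by
    intro z hz
    have hz0 : z ≠ 0 := by
      intro h; rw [h] at hz; simp at hz; linarith
    have hczo : (starRingEnd ℂ) z ≠ 0 := by simpa using hz0
    set w : ℂ := ((starRingEnd ℂ) z)⁻¹ with hw
    have hw0 : w ≠ 0 := inv_ne_zero hczo
    have hwn : ‖w‖ = ‖z‖⁻¹ := by rw [hw, norm_inv, RCLike.norm_conj]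
    have hwlt : ‖w‖ < 1 := by
      rw [hwn]; exact inv_lt_one_of_one_lt₀ hz
    have hkey := hin w hwlt
    -- ‖Pstar.eval z‖ = ‖z‖^(n+1) * ‖P.eval w‖
    have e1 : ‖Pstar.eval z‖ = ‖z‖ ^ (n + 1) * ‖P.eval w‖ := by
      show ‖Q.reverse.eval z‖ = _
      rw [rev_eval Q z hz0, hQdeg, norm_mul, norm_pow]
      congr 1
      rw [hQ, conj_eval, RCLike.norm_conj]
      congr 2
      rw [hw, map_inv₀]
    -- ‖P.eval z‖ = ‖z‖^(n+1) * ‖Pstar.eval w‖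
    have e2 : ‖P.eval z‖ = ‖z‖ ^ (n + 1) * ‖Pstar.eval w‖ := by
      have h3 : Pstar.eval w = w ^ (n + 1) * Q.eval w⁻¹ := by
        show Q.reverse.eval w = _
        rw [rev_eval Q w hw0, hQdeg]
      have h4 : Q.eval w⁻¹ = (starRingEnd ℂ) (P.eval z) := by
        rw [hQ, conj_eval]
        congr 2
        rw [hw, inv_inv]
        simp
      rw [h3, h4, norm_mul, norm_pow, hwn, RCLike.norm_conj, inv_pow,
        mul_inv_cancel_left₀ (by positivity)]
    rw [e1, e2]
    have hzpos : (0 : ℝ) < ‖z‖ ^ (n + 1) := by positivity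
    exact (mul_lt_mul_iff_right₀ hzpos).mpr hkey
  -- equal norms on the circle for zeros
  have hzero : ∀ z : ℂ, ‖Pstar.eval z‖ = ‖P.eval z‖ → ‖z‖ = 1 := by
    intro z hEq
    rcases lt_trichotomy ‖z‖ 1 with h | h | h
    · exact absurd hEq (ne_of_lt (hin z h))
    · exact h
    · exact absurd hEq.symm (ne_of_lt (hout z h))
  -- degree bounds
  have hPsdeg : Pstar.natDegree ≤ n + 1 := hQdeg ▸ Q.reverse_natDegree_le
  have hAle : A.natDegree ≤ n + 1 :=
    le_trans (Polynomial.natDegree_C_mul_le _ _)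
      (le_trans (Polynomial.natDegree_add_le _ _) (by rw [hdeg]; exact max_le le_rfl hPsdeg))
  have hBle : B.natDegree ≤ n + 1 :=
    le_trans (Polynomial.natDegree_C_mul_le _ _)
      (le_trans (Polynomial.natDegree_sub_le _ _) (by rw [hdeg]; exact max_le le_rfl hPsdeg))
  have hAcoeff : A.coeff (n + 1) ≠ 0 := by
    show (Polynomial.C (1 / 2 : ℂ) * (P + Pstar)).coeff (n + 1) ≠ 0
    rw [Polynomial.coeff_C_mul, Polynomial.coeff_add, hPsTop]
    intro h
    have h2 : P.coeff (n + 1) + (starRingEnd ℂ) (P.coeff 0) = 0 := by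
      field_simp at h
      simpa using h
    have : P.coeff (n + 1) = -((starRingEnd ℂ) (P.coeff 0)) := by linear_combination h2
    rw [this, norm_neg, RCLike.norm_conj] at h0
    exact lt_irrefl _ h0
  have hBcoeff : B.coeff (n + 1) ≠ 0 := by
    show (Polynomial.C (Complex.I / 2) * (P - Pstar)).coeff (n + 1) ≠ 0
    rw [Polynomial.coeff_C_mul, Polynomial.coeff_sub, hPsTop]
    intro h
    have hI : (Complex.I / 2 : ℂ) ≠ 0 := by
      simp [Complex.I_ne_zero, div_ne_zero_iff]
    have h2 : P.coeff (n + 1) - (starRingEnd ℂ) (P.coeff 0) = 0 := by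
      rcases mul_eq_zero.mp h with h' | h'
      · exact absurd h' hI
      · exact h'
    have : P.coeff (n + 1) = (starRingEnd ℂ) (P.coeff 0) := by linear_combination h2
    rw [this, RCLike.norm_conj] at h0
    exact lt_irrefl _ h0
  refine ⟨le_antisymm hAle (Polynomial.le_natDegree_of_ne_zero hAcoeff),
    le_antisymm hBle (Polynomial.le_natDegree_of_ne_zero hBcoeff), ?_, ?_⟩
  · intro z hz
    show ‖z‖ = 1
    have : P.eval z + Pstar.eval z = 0 := by
      have hz' : (1 / 2 : ℂ) * (P.eval z + Pstar.eval z) = 0 := by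
        simpa [A, Polynomial.eval_mul] using hz
      rcases mul_eq_zero.mp hz' with h' | h'
      · norm_num at h'
      · exact h'
    apply hzero
    rw [show Pstar.eval z = -(P.eval z) by linear_combination this, norm_neg]
  · intro z hz
    show ‖z‖ = 1
    have : P.eval z - Pstar.eval z = 0 := by
      have hz' : (Complex.I / 2 : ℂ) * (P.eval z - Pstar.eval z) = 0 := by
        simpa [B, Polynomial.eval_mul] using hz
      rcases mul_eq_zero.mp hz' with h' | h'
      · exact absurd h' (by simp [Complex.I_ne_zero, div_ne_zero_iff])
      · exact h'
    apply hzero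
    rw [show Pstar.eval z = P.eval z by linear_combination -this]
end

section
/- Let P be a polynomial of exact degree n+1 with |P*(z)| < |P(z)| for |z| < 1 and no zeros on the unit circle, with companion polynomials 𝒜 = (P+P*)/2 and ℬ = i(P−P*)/2 and reproducing kernel 𝒦 of the space 𝒫_n with weight |P(e(x))|^{-2}. Then 𝒜 and ℬ have only simple zeros and 𝒜 and ℬ have no common zero. -/
open Polynomial Real

lemma exists_theta (φ : ℝ) (m : ℕ) (hm : 2 ≤ m) :
    ∃ θ : ℝ, π/2 < θ ∧ θ < 3*π/2 ∧ Real.sin (φ - m * θ) < 0 := by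
  have hπ := Real.pi_pos
  have hm' : (2:ℝ) ≤ (m:ℝ) := by exact_mod_cast hm
  have hmpos : (0:ℝ) < m := by linarith
  set a : ℝ := m * (π/2) with ha
  set k : ℤ := ⌈(a - φ - π/2)/(2*π)⌉ with hk
  set ψ₀ : ℝ := φ + π/2 + 2*π*k with hψ₀
  have h2π : (0:ℝ) < 2*π := by linarith
  have hceil1 : (a - φ - π/2)/(2*π) ≤ (k:ℝ) := Int.le_ceil _
  have hceil2 : (k:ℝ) < (a - φ - π/2)/(2*π) + 1 := Int.ceil_lt_add_one _
  clear_value a k ψ₀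
  have hge : a ≤ ψ₀ := by
    have h := (div_le_iff₀ h2π).mp hceil1
    rw [hψ₀]; nlinarith [h]
  have hlt : ψ₀ < a + 2*π := by
    have h : ((k:ℝ) - 1) * (2*π) < a - φ - π/2 := by
      have h' : (k:ℝ) - 1 < (a - φ - π/2)/(2*π) := by linarith
      calc ((k:ℝ) - 1) * (2*π) < ((a - φ - π/2)/(2*π)) * (2*π) :=
            mul_lt_mul_of_pos_right h' h2π
        _ = a - φ - π/2 := div_mul_cancel₀ _ (ne_of_gt h2π)
    rw [hψ₀]; nlinarith [h]
  have hb : a + 2*π ≤ 3*π/2 * m := by rw [ha]; nlinarith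
  have hsin0 : Real.sin (φ - ψ₀) = -1 := by
    have h : φ - ψ₀ = (-(π/2)) + ((-k : ℤ) : ℝ) * (2*π) := by
      rw [hψ₀]; push_cast; ring
    rw [h, Real.sin_add_int_mul_two_pi, Real.sin_neg, Real.sin_pi_div_two]
  by_cases hcase : a < ψ₀
  · refine ⟨ψ₀ / m, ?_, ?_, ?_⟩
    · rw [lt_div_iff₀ hmpos]
      calc π/2 * m = a := by rw [ha]; ring
        _ < ψ₀ := hcase
    · rw [div_lt_iff₀ hmpos]; linarith
    · have h : (m:ℝ) * (ψ₀ / m) = ψ₀ := by field_simp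
      rw [h, hsin0]; norm_num
  · push_neg at hcase
    refine ⟨(ψ₀ + π/4) / m, ?_, ?_, ?_⟩
    · rw [lt_div_iff₀ hmpos]
      calc π/2 * m = a := by rw [ha]; ring
        _ < ψ₀ + π/4 := by linarith
    · rw [div_lt_iff₀ hmpos]; linarith
    · have hmm : (m:ℝ) * ((ψ₀ + π/4) / m) = ψ₀ + π/4 := by field_simp
      rw [hmm]
      have h : φ - (ψ₀ + π/4) = (-(3*π/4)) + ((-k : ℤ) : ℝ) * (2*π) := by
        rw [hψ₀]; push_cast; ring
      rw [h, Real.sin_add_int_mul_two_pi, Real.sin_neg, neg_lt_zero]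
      apply Real.sin_pos_of_pos_of_lt_pi <;> nlinarith

lemma key (A B : Polynomial ℂ)
    (h1 : ∀ w : ℂ, ‖w‖ < 1 → 0 < (B.eval w * (starRingEnd ℂ) (A.eval w)).im)
    (h2 : ∀ w : ℂ, 1 < ‖w‖ → (B.eval w * (starRingEnd ℂ) (A.eval w)).im < 0)
    (hnc : ∀ z : ℂ, A.eval z = 0 → B.eval z ≠ 0) :
    ∀ z : ℂ, A.eval z = 0 → (Polynomial.derivative A).eval z ≠ 0 := by
  have hπ := Real.pi_pos
  have hA0 : A ≠ 0 := by
    intro h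
    have := h1 0 (by norm_num)
    rw [h] at this; simp at this
  intro z₀ h0 hder
  -- z₀ is on the unit circle
  have hF0 : (B.eval z₀ * (starRingEnd ℂ) (A.eval z₀)).im = 0 := by rw [h0]; simp
  have hn1 : ‖z₀‖ = 1 := by
    rcases lt_trichotomy ‖z₀‖ 1 with h | h | h
    · exact absurd hF0 (ne_of_gt (h1 z₀ h))
    · exact h
    · exact absurd hF0 (ne_of_lt (h2 z₀ h))
  -- multiplicity at least 2
  set m : ℕ := rootMultiplicity z₀ A with hmdef
  have hm2 : 2 ≤ m := by
    rw [hmdef]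
    rw [Polynomial.le_rootMultiplicity_iff hA0]
    obtain ⟨Q, hQ⟩ := (Polynomial.dvd_iff_isRoot.mpr h0)
    have hQ0 : Q.eval z₀ = 0 := by
      have hd := congrArg (fun p => Polynomial.eval z₀ (Polynomial.derivative p)) hQ
      simp only [Polynomial.derivative_mul, Polynomial.derivative_sub,
        Polynomial.derivative_X, Polynomial.derivative_C, Polynomial.eval_add,
        Polynomial.eval_mul, Polynomial.eval_sub, Polynomial.eval_X, Polynomial.eval_C,
        sub_zero, one_mul, sub_self, zero_mul, add_zero] at hd
      rw [hder] at hd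
      simpa using hd.symm
    obtain ⟨R, hR⟩ := (Polynomial.dvd_iff_isRoot.mpr hQ0)
    exact ⟨R, by rw [hQ, hR]; ring⟩
  -- factor out the root
  set g : Polynomial ℂ := A /ₘ (Polynomial.X - Polynomial.C z₀) ^ m with hgdef
  have hfac : (Polynomial.X - Polynomial.C z₀) ^ m * g = A :=
    Polynomial.pow_mul_divByMonic_rootMultiplicity_eq A z₀
  have hg : g.eval z₀ ≠ 0 :=
    Polynomial.eval_divByMonic_pow_rootMultiplicity_ne_zero z₀ hA0
  have hz₀ : z₀ ≠ 0 := by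
    intro h; rw [h] at hn1; simp at hn1
  -- the nonzero constant
  set c : ℂ := B.eval z₀ * (starRingEnd ℂ) (g.eval z₀) with hcdef
  have hc : c ≠ 0 := mul_ne_zero (hnc z₀ h0) (by simpa using hg)
  set d : ℂ := c * ((starRingEnd ℂ) z₀) ^ m with hddef
  have hd0 : d ≠ 0 := mul_ne_zero hc (pow_ne_zero _ (by simpa using hz₀))
  obtain ⟨θ, hθ1, hθ2, hθsin⟩ := exists_theta (Complex.arg d) m hm2
  set u : ℂ := z₀ * Complex.exp (θ * Complex.I) with hudef
  have hcu : (starRingEnd ℂ) u = (starRingEnd ℂ) z₀ * Complex.exp (-(θ * Complex.I)) := by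
    rw [hudef, map_mul, ← Complex.exp_conj]
    congr 1
    simp [map_mul, Complex.conj_I]
  -- the continuous sign function
  set ϕ : ℝ → ℝ := fun t =>
    (B.eval (z₀ + ↑t * u) * ((starRingEnd ℂ) u) ^ m *
      (starRingEnd ℂ) (g.eval (z₀ + ↑t * u))).im with hϕdef
  have hϕ0 : ϕ 0 < 0 := by
    have e1 : ϕ 0 = (d * Complex.exp (↑(-((m : ℝ) * θ)) * Complex.I)).im := by
      rw [hϕdef]
      simp only [Complex.ofReal_zero, zero_mul, add_zero]
      congr 1
      rw [hcu, mul_pow, hddef, hcdef]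
      rw [← Complex.exp_nat_mul]
      push_cast
      ring_nf
    rw [e1]
    nth_rewrite 1 [← Complex.norm_mul_exp_arg_mul_I d]
    rw [mul_assoc, ← Complex.exp_add, ← add_mul, ← Complex.ofReal_add]
    have e2 : ∀ (r x : ℝ), ((r : ℂ) * Complex.exp ((x:ℂ) * Complex.I)).im = r * Real.sin x := by
      intro r x
      rw [Complex.mul_im]
      simp [Complex.exp_ofReal_mul_I_im, Complex.exp_ofReal_mul_I_re]
    rw [e2]
    have habs : 0 < ‖d‖ := by
      simpa using hd0
    have e3 : d.arg + -((m:ℝ) * θ) = d.arg - (m:ℝ) * θ := by ring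
    rw [e3]
    exact mul_neg_of_pos_of_neg habs hθsin
  -- continuity
  have hline : Continuous fun t : ℝ => z₀ + ↑t * u := by continuity
  have hcont : Continuous ϕ := by
    rw [hϕdef]
    apply Complex.continuous_im.comp
    exact ((B.continuous.comp hline).mul continuous_const).mul
      (Complex.continuous_conj.comp (g.continuous.comp hline))
  have hev : ∀ᶠ t in nhds (0 : ℝ), ϕ t < 0 :=
    Filter.Tendsto.eventually_lt_const hϕ0 (hcont.tendsto 0)
  obtain ⟨δ, hδpos, hδ⟩ := Metric.eventually_nhds_iff.mp hev
  -- the direction points into the disk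
  have hcos : Real.cos θ < 0 :=
    Real.cos_neg_of_pi_div_two_lt_of_lt hθ1 (by linarith)
  set t : ℝ := min (δ/2) (-Real.cos θ / 2) with htdef
  have ht : 0 < t := by
    apply lt_min <;> linarith
  have htδ : ϕ t < 0 := by
    apply hδ
    have : t ≤ δ/2 := min_le_left _ _
    rw [Real.dist_eq, sub_zero, abs_of_pos ht]; linarith
  have htc : t + 2 * Real.cos θ < 0 := by
    have : t ≤ -Real.cos θ / 2 := min_le_right _ _
    linarith
  -- the point z₀ + t u lies inside the disk
  have hnormu : Complex.normSq u = 1 := by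
    rw [hudef, Complex.normSq_mul]
    have h1 : Complex.normSq z₀ = 1 := by
      rw [Complex.normSq_eq_norm_sq, hn1]; norm_num
    have h2 : Complex.normSq (Complex.exp (↑θ * Complex.I)) = 1 := by
      rw [Complex.normSq_eq_norm_sq, Complex.norm_exp_ofReal_mul_I]; norm_num
    rw [h1, h2]; norm_num
  have hre : (z₀ * (starRingEnd ℂ) u).re = Real.cos θ := by
    rw [hcu, ← mul_assoc, Complex.mul_conj]
    have h1 : Complex.normSq z₀ = 1 := by
      rw [Complex.normSq_eq_norm_sq, hn1]; norm_num
    rw [h1]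
    simp only [Complex.ofReal_one, one_mul]
    have : -(↑θ * Complex.I) = ((-θ : ℝ) : ℂ) * Complex.I := by push_cast; ring
    rw [this, Complex.exp_ofReal_mul_I_re, Real.cos_neg]
  have hinside : ‖z₀ + ↑t * u‖ < 1 := by
    have hnsq : Complex.normSq (z₀ + ↑t * u) = 1 + t * (t + 2 * Real.cos θ) := by
      rw [Complex.normSq_add]
      have h1 : Complex.normSq z₀ = 1 := by
        rw [Complex.normSq_eq_norm_sq, hn1]; norm_num
      have h2 : Complex.normSq (↑t * u) = t ^ 2 := by
        rw [Complex.normSq_mul, hnormu, Complex.normSq_ofReal]; ring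
      have h3 : (z₀ * (starRingEnd ℂ) (↑t * u)).re = t * Real.cos θ := by
        rw [map_mul, Complex.conj_ofReal]
        have : z₀ * ((t:ℂ) * (starRingEnd ℂ) u) = (t:ℂ) * (z₀ * (starRingEnd ℂ) u) := by ring
        rw [this, Complex.mul_re]
        simp [hre]
      rw [h1, h2, h3]; ring
    have hlt1 : Complex.normSq (z₀ + ↑t * u) < 1 := by
      rw [hnsq]; nlinarith
    have := Complex.normSq_eq_norm_sq (z₀ + ↑t * u)
    nlinarith [norm_nonneg (z₀ + ↑t * u)]
  -- contradiction with positivity inside the disk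
  have hpos := h1 _ hinside
  have heval : A.eval (z₀ + ↑t * u) = (↑t * u) ^ m * g.eval (z₀ + ↑t * u) := by
    conv_lhs => rw [← hfac]
    simp only [Polynomial.eval_mul, Polynomial.eval_pow, Polynomial.eval_sub,
      Polynomial.eval_X, Polynomial.eval_C]
    congr 2
    ring
  have hsplit : (B.eval (z₀ + ↑t * u) *
      (starRingEnd ℂ) (A.eval (z₀ + ↑t * u))).im = t ^ m * ϕ t := by
    rw [heval, map_mul, map_pow, map_mul, Complex.conj_ofReal]
    have hthis : B.eval (z₀ + ↑t * u) * (((t:ℂ) * (starRingEnd ℂ) u) ^ m *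
        (starRingEnd ℂ) (g.eval (z₀ + ↑t * u))) =
        ((t:ℂ)) ^ m * (B.eval (z₀ + ↑t * u) * ((starRingEnd ℂ) u) ^ m *
        (starRingEnd ℂ) (g.eval (z₀ + ↑t * u))) := by ring
    rw [hthis, ← Complex.ofReal_pow]
    show _ = t ^ m * (B.eval (z₀ + ↑t * u) * ((starRingEnd ℂ) u) ^ m *
        (starRingEnd ℂ) (g.eval (z₀ + ↑t * u))).im
    rw [Complex.mul_im, Complex.ofReal_re, Complex.ofReal_im]
    ring
  rw [hsplit] at hpos
  nlinarith [pow_pos ht m]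

/-- Let `P` be a polynomial of exact degree `n+1` with `|P*(z)| < |P(z)|`
for `|z| < 1` and no zeros on the unit circle, with companion polynomials
`𝒜 = (P + P*)/2`, `ℬ = i(P - P*)/2`, and let `𝒦` be the reproducing kernel of `𝒫_n`
with weight `|P(e(x))|^{-2}`, which admits the representation
`𝒦(w,z)(1 - w̄z) = (2/i)(ℬ(z)conj(𝒜(w)) - 𝒜(z)conj(ℬ(w)))` and satisfies
`𝒦(w,w) > 0` for all `w`.  Then `𝒜` and `ℬ` have only simple zeros, and they have no
common zero. -/
theorem stmt12 (n : ℕ) (P A B : Polynomial ℂ)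
    (hdeg : P.natDegree = n + 1)
    (hcirc : ∀ z : ℂ, ‖z‖ = 1 → P.eval z ≠ 0)
    (hin : ∀ z : ℂ, ‖z‖ < 1 →
      ‖((P.map (starRingEnd ℂ)).reverse).eval z‖ < ‖P.eval z‖)
    (hA : A = Polynomial.C (1 / 2 : ℂ) * (P + (P.map (starRingEnd ℂ)).reverse))
    (hB : B = Polynomial.C (Complex.I / 2) * (P - (P.map (starRingEnd ℂ)).reverse))
    (K : ℂ → ℂ → ℂ)
    (hrep : ∀ w z : ℂ, K w z * (1 - (starRingEnd ℂ) w * z) =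
      (2 / Complex.I) * (B.eval z * (starRingEnd ℂ) (A.eval w) -
        A.eval z * (starRingEnd ℂ) (B.eval w)))
    (hpos : ∀ w : ℂ, 0 < (K w w).re) :
    (∀ z : ℂ, A.eval z = 0 → (Polynomial.derivative A).eval z ≠ 0) ∧
    (∀ z : ℂ, B.eval z = 0 → (Polynomial.derivative B).eval z ≠ 0) ∧
    (∀ z : ℂ, ¬(A.eval z = 0 ∧ B.eval z = 0)) := by
  -- the fundamental sign identity
  have hkey : ∀ w : ℂ, (K w w).re * (1 - Complex.normSq w) =
      4 * (B.eval w * (starRingEnd ℂ) (A.eval w)).im := by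
    intro w
    have h := hrep w w
    set s : ℂ := B.eval w * (starRingEnd ℂ) (A.eval w) with hs
    have hconj : A.eval w * (starRingEnd ℂ) (B.eval w) = (starRingEnd ℂ) s := by
      rw [hs, map_mul, Complex.conj_conj]; ring
    rw [hconj, Complex.sub_conj] at h
    have hrhs : (2 / Complex.I) * ((2 * s.im : ℝ) * Complex.I) = ((4 * s.im : ℝ) : ℂ) := by
      have hI : (2:ℂ) / Complex.I = -2 * Complex.I := by
        rw [div_eq_mul_inv, Complex.inv_I]; ring
      rw [hI]
      have : (-2 * Complex.I) * ((2 * s.im : ℝ) * Complex.I) =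
          (-2 * (2 * s.im : ℝ)) * (Complex.I * Complex.I) := by ring
      rw [this, Complex.I_mul_I]
      push_cast; ring
    rw [hrhs] at h
    have hmc : (starRingEnd ℂ) w * w = ((Complex.normSq w : ℝ) : ℂ) := by
      rw [mul_comm]; exact Complex.mul_conj w
    rw [hmc] at h
    have h1c : (1 : ℂ) - ((Complex.normSq w : ℝ) : ℂ) = ((1 - Complex.normSq w : ℝ) : ℂ) := by
      push_cast; ring
    rw [h1c] at h
    have := congrArg Complex.re h
    rwa [Complex.mul_re, Complex.ofReal_re, Complex.ofReal_im, mul_zero, sub_zero,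
      Complex.ofReal_re] at this
  have hnsq : ∀ w : ℂ, Complex.normSq w = ‖w‖ ^ 2 := by
    intro w
    rw [Complex.normSq_eq_norm_sq]
  have h1 : ∀ w : ℂ, ‖w‖ < 1 → 0 < (B.eval w * (starRingEnd ℂ) (A.eval w)).im := by
    intro w hw
    have hk := hkey w
    have hnq : Complex.normSq w < 1 := by
      rw [hnsq w]; nlinarith [norm_nonneg w]
    nlinarith [hpos w]
  have h2 : ∀ w : ℂ, 1 < ‖w‖ → (B.eval w * (starRingEnd ℂ) (A.eval w)).im < 0 := by
    intro w hw
    have hk := hkey w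
    have hnq : 1 < Complex.normSq w := by
      rw [hnsq w]; nlinarith [norm_nonneg w]
    nlinarith [hpos w]
  -- P = A - I • B
  have hP : ∀ z : ℂ, P.eval z = A.eval z - Complex.I * B.eval z := by
    intro z
    rw [hA, hB]
    simp only [Polynomial.eval_mul, Polynomial.eval_add, Polynomial.eval_sub,
      Polynomial.eval_C]
    have : Complex.I * (Complex.I / 2) = -(1/2) := by
      rw [mul_div_assoc', Complex.I_mul_I]; norm_num
    field_simp
    ring_nf
    rw [Complex.I_sq]
    ring
  -- no common zeros
  have hcz : ∀ z : ℂ, ¬(A.eval z = 0 ∧ B.eval z = 0) := by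
    rintro z ⟨ha0, hb0⟩
    have hF0 : (B.eval z * (starRingEnd ℂ) (A.eval z)).im = 0 := by rw [ha0]; simp
    have hn1 : ‖z‖ = 1 := by
      rcases lt_trichotomy ‖z‖ 1 with h | h | h
      · exact absurd hF0 (ne_of_gt (h1 z h))
      · exact h
      · exact absurd hF0 (ne_of_lt (h2 z h))
    exact hcirc z hn1 (by rw [hP z, ha0, hb0]; ring)
  have hncA : ∀ z : ℂ, A.eval z = 0 → B.eval z ≠ 0 := by
    intro z ha0 hb0; exact hcz z ⟨ha0, hb0⟩
  refine ⟨key A B h1 h2 hncA, ?_, hcz⟩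
  -- for B : swap roles using -A
  have hswap : ∀ w : ℂ, ((-A).eval w * (starRingEnd ℂ) (B.eval w)).im =
      (B.eval w * (starRingEnd ℂ) (A.eval w)).im := by
    intro w
    rw [Polynomial.eval_neg]
    simp [Complex.mul_im]
    ring
  have h1' : ∀ w : ℂ, ‖w‖ < 1 → 0 < ((-A).eval w * (starRingEnd ℂ) (B.eval w)).im := by
    intro w hw; rw [hswap w]; exact h1 w hw
  have h2' : ∀ w : ℂ, 1 < ‖w‖ → ((-A).eval w * (starRingEnd ℂ) (B.eval w)).im < 0 := by
    intro w hw; rw [hswap w]; exact h2 w hw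
  have hncB : ∀ z : ℂ, B.eval z = 0 → (-A).eval z ≠ 0 := by
    intro z hb0 ha0
    rw [Polynomial.eval_neg, neg_eq_zero] at ha0
    exact hcz z ⟨ha0, hb0⟩
  exact key B (-A) h1' h2' hncB
end

section
/- For λ > 0 and x ∉ ℤ, the periodization h̃(λ,x) := Σ_{n∈ℤ} (v(λ,x+n) − v(λ,−x−n)) equals −∂/∂λ ( sinh(−λ(x − ⌊x⌋ − 1/2)) / sinh(λ/2) ), and consequently ∫_0^∞ h̃(λ,x) dλ = −2(x − ⌊x⌋ − 1/2), i.e. the periodization of sgn recovers −2 times the sawtooth function. -/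
open MeasureTheory

/-- `v(λ,x) = x e^{-λx}` for `x > 0`, and `0` for `x ≤ 0`. -/
noncomputable def v (lam x : ℝ) : ℝ := if 0 < x then x * Real.exp (-lam * x) else 0

namespace Stmt16Aux

open Real Set Filter

/-- Closed form of the periodization. -/
noncomputable def Hh (a l : ℝ) : ℝ :=
  (a * Real.sinh (l * (1 - a)) - (1 - a) * Real.sinh (l * a)) / (2 * Real.sinh (l / 2) ^ 2)

lemma abs_sinh_sub_self_le {y : ℝ} (h0 : 0 ≤ y) (h1 : y ≤ 1) :
    |Real.sinh y - y| ≤ 2 / 9 * y ^ 3 := by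
  have hy : |y| ≤ 1 := by rwa [abs_of_nonneg h0]
  have hb1 := Real.exp_bound hy (by norm_num : 0 < 3)
  have hb2 := Real.exp_bound (x := -y) (by rwa [abs_neg]) (by norm_num : 0 < 3)
  have e1 : ∑ m ∈ Finset.range 3, y ^ m / (Nat.factorial m) = 1 + y + y ^ 2 / 2 := by
    simp [Finset.sum_range_succ, Nat.factorial]
  have e2 : ∑ m ∈ Finset.range 3, (-y) ^ m / (Nat.factorial m) = 1 + (-y) + y ^ 2 / 2 := by
    simp [Finset.sum_range_succ, Nat.factorial]
  rw [e1] at hb1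
  rw [e2, abs_neg] at hb2
  have key : Real.sinh y - y =
      ((Real.exp y - (1 + y + y ^ 2 / 2)) - (Real.exp (-y) - (1 + (-y) + y ^ 2 / 2))) / 2 := by
    rw [Real.sinh_eq]; ring
  rw [key]
  have h3 : |y| ^ 3 = y ^ 3 := by rw [abs_of_nonneg h0]
  rw [h3] at hb1 hb2
  have := abs_sub (Real.exp y - (1 + y + y ^ 2 / 2)) (Real.exp (-y) - (1 + (-y) + y ^ 2 / 2))
  rw [abs_div]
  rw [abs_of_pos (by norm_num : (0:ℝ) < 2)]
  calc |Real.exp y - (1 + y + y ^ 2 / 2) - (Real.exp (-y) - (1 + (-y) + y ^ 2 / 2))| / 2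
      ≤ (|Real.exp y - (1 + y + y ^ 2 / 2)| + |Real.exp (-y) - (1 + (-y) + y ^ 2 / 2)|) / 2 := by
        gcongr
    _ ≤ 2 / 9 * y ^ 3 := by
        have hc : ((Nat.succ 3 : ℕ) : ℝ) / ((Nat.factorial 3 : ℕ) * ((3:ℕ) : ℝ)) = 2 / 9 := by
          norm_num [Nat.factorial]
        rw [hc] at hb1 hb2
        linarith


lemma hasSum_nat_aux (a l : ℝ) (hl : 0 < l) :
    HasSum (fun k : ℕ => (a + k) * Real.exp (-l * (a + k)))
      (Real.exp (-(l * a)) *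
        (a / (1 - Real.exp (-l)) + Real.exp (-l) / (1 - Real.exp (-l)) ^ 2)) := by
  have hq0 : 0 < Real.exp (-l) := Real.exp_pos _
  have hq1 : Real.exp (-l) < 1 := by
    rw [← Real.exp_zero]
    exact Real.exp_lt_exp.2 (by linarith)
  have h1 : HasSum (fun k : ℕ => a * Real.exp (-l) ^ k) (a * (1 - Real.exp (-l))⁻¹) :=
    (hasSum_geometric_of_lt_one hq0.le hq1).mul_left a
  have h2 : HasSum (fun k : ℕ => (k : ℝ) * Real.exp (-l) ^ k)
      (Real.exp (-l) / (1 - Real.exp (-l)) ^ 2) :=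
    hasSum_coe_mul_geometric_of_norm_lt_one (by rwa [Real.norm_eq_abs, abs_of_pos hq0])
  have h3 := (h1.add h2).mul_left (Real.exp (-(l * a)))
  have hfun : (fun k : ℕ => (a + k) * Real.exp (-l * (a + k))) =
      fun k : ℕ => Real.exp (-(l * a)) * (a * Real.exp (-l) ^ k + (k : ℝ) * Real.exp (-l) ^ k) := by
    funext k
    have hq : Real.exp (-l) ^ k = Real.exp ((k : ℕ) * (-l)) := (Real.exp_nat_mul _ _).symm
    rw [hq, show (-l * (a + k)) = (-(l * a)) + (k : ℕ) * (-l) by push_cast; ring, Real.exp_add]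
    push_cast
    ring
  rw [hfun]
  have hval : Real.exp (-(l * a)) * (a * (1 - Real.exp (-l))⁻¹ + Real.exp (-l) / (1 - Real.exp (-l)) ^ 2)
      = Real.exp (-(l * a)) * (a / (1 - Real.exp (-l)) + Real.exp (-l) / (1 - Real.exp (-l)) ^ 2) := by
    ring
  rw [← hval]
  exact h3

lemma closed_form (a l : ℝ) (hl : 0 < l) :
    Real.exp (-(l * a)) * (a / (1 - Real.exp (-l)) + Real.exp (-l) / (1 - Real.exp (-l)) ^ 2)
      - Real.exp (-(l * (1 - a))) *
        ((1 - a) / (1 - Real.exp (-l)) + Real.exp (-l) / (1 - Real.exp (-l)) ^ 2)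
      = Hh a l := by
  rw [Hh, Real.sinh_eq, Real.sinh_eq, Real.sinh_eq]
  have hY2 : Real.exp (l / 2) ^ 2 = Real.exp l := by
    rw [sq, ← Real.exp_add]; norm_num
  have e1 : Real.exp (-(l * a)) = (Real.exp (l * a))⁻¹ := Real.exp_neg _
  have e2 : Real.exp (-l) = (Real.exp (l / 2) ^ 2)⁻¹ := by rw [hY2, Real.exp_neg]
  have e3 : Real.exp (-(l * (1 - a))) = Real.exp (l * a) / Real.exp (l / 2) ^ 2 := by
    rw [show -(l * (1 - a)) = l * a + -l by ring, Real.exp_add, Real.exp_neg, hY2]; ring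
  have e4 : Real.exp (l * (1 - a)) = Real.exp (l / 2) ^ 2 / Real.exp (l * a) := by
    rw [show (l * (1 - a)) = l + -(l * a) by ring, Real.exp_add, Real.exp_neg, hY2]; ring
  have e5 : Real.exp (-(l / 2)) = (Real.exp (l / 2))⁻¹ := Real.exp_neg _
  rw [e1, e2, e3, e4, e5]
  have hX0 : (0:ℝ) < Real.exp (l * a) := Real.exp_pos _
  have hY1 : 1 < Real.exp (l / 2) := by
    rw [← Real.exp_zero]; exact Real.exp_lt_exp.2 (by linarith)
  have hY0 : (0:ℝ) < Real.exp (l / 2) := by linarith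
  set X := Real.exp (l * a)
  set Y := Real.exp (l / 2)
  have h2 : X ≠ 0 := ne_of_gt hX0
  have h3 : Y ≠ 0 := ne_of_gt hY0
  have h5 : Y ^ 2 - 1 ≠ 0 := by intro h; nlinarith
  rw [show (1:ℝ) - (Y ^ 2)⁻¹ = (Y ^ 2 - 1) / Y ^ 2 from by field_simp,
      show Y - Y⁻¹ = (Y ^ 2 - 1) / Y from by field_simp]
  field_simp
  ring

lemma deriv_form (a l : ℝ) (hl : 0 < l) :
    (Real.cosh (-(l * (a - 1/2))) * (-(a - 1/2)) * Real.sinh (l / 2)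
      - Real.sinh (-(l * (a - 1/2))) * (Real.cosh (l / 2) * (1/2))) / Real.sinh (l / 2) ^ 2
      = -(Hh a l) := by
  rw [Hh, Real.sinh_eq, Real.sinh_eq, Real.sinh_eq, Real.sinh_eq, Real.cosh_eq, Real.cosh_eq]
  have hY2 : Real.exp (l / 2) ^ 2 = Real.exp l := by
    rw [sq, ← Real.exp_add]; norm_num
  have e1 : Real.exp (-(l * (a - 1/2))) = Real.exp (l / 2) / Real.exp (l * a) := by
    rw [show -(l * (a - 1/2)) = l / 2 + -(l * a) by ring, Real.exp_add, Real.exp_neg]; ring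
  have e2 : Real.exp (-(-(l * (a - 1/2)))) = Real.exp (l * a) / Real.exp (l / 2) := by
    rw [show -(-(l * (a - 1/2))) = l * a + -(l / 2) by ring, Real.exp_add, Real.exp_neg]; ring
  have e3 : Real.exp (-(l / 2)) = (Real.exp (l / 2))⁻¹ := Real.exp_neg _
  have e4 : Real.exp (l * (1 - a)) = Real.exp (l / 2) ^ 2 / Real.exp (l * a) := by
    rw [show (l * (1 - a)) = l + -(l * a) by ring, Real.exp_add, Real.exp_neg, hY2]; ring
  have e5 : Real.exp (-(l * (1 - a))) = Real.exp (l * a) / Real.exp (l / 2) ^ 2 := by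
    rw [show -(l * (1 - a)) = l * a + -l by ring, Real.exp_add, Real.exp_neg, hY2]; ring
  have e6 : Real.exp (-(l * a)) = (Real.exp (l * a))⁻¹ := Real.exp_neg _
  rw [e1, e2, e3, e4, e5, e6]
  have hX0 : (0:ℝ) < Real.exp (l * a) := Real.exp_pos _
  have hY1 : 1 < Real.exp (l / 2) := by
    rw [← Real.exp_zero]; exact Real.exp_lt_exp.2 (by linarith)
  have hY0 : (0:ℝ) < Real.exp (l / 2) := by linarith
  set X := Real.exp (l * a)
  set Y := Real.exp (l / 2)
  have h2 : X ≠ 0 := ne_of_gt hX0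
  have h3 : Y ≠ 0 := ne_of_gt hY0
  have h5 : Y ^ 2 - 1 ≠ 0 := by intro h; nlinarith
  rw [show Y - Y⁻¹ = (Y ^ 2 - 1) / Y from by field_simp,
      show Y + Y⁻¹ = (Y ^ 2 + 1) / Y from by field_simp]
  field_simp
  ring

lemma hasDeriv_g (a l : ℝ) (hl : 0 < l) :
    HasDerivAt (fun t : ℝ => Real.sinh (-(t * (a - 1/2))) / Real.sinh (t / 2)) (-(Hh a l)) l := by
  have h1 : HasDerivAt (fun t : ℝ => -(t * (a - 1/2))) (-(a - 1/2)) l := by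
    exact ((hasDerivAt_id l).mul_const (a - 1/2)).neg.congr_deriv (by ring)
  have h2 : HasDerivAt (fun t : ℝ => Real.sinh (-(t * (a - 1/2))))
      (Real.cosh (-(l * (a - 1/2))) * (-(a - 1/2))) l := (Real.hasDerivAt_sinh _).comp l h1
  have h3 : HasDerivAt (fun t : ℝ => t / 2) ((1:ℝ)/2) l := by
    simpa using (hasDerivAt_id l).div_const 2
  have h4 : HasDerivAt (fun t : ℝ => Real.sinh (t / 2)) (Real.cosh (l / 2) * (1/2)) l :=
    (Real.hasDerivAt_sinh _).comp l h3
  have h5 : Real.sinh (l / 2) ≠ 0 := by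
    rw [Real.sinh_ne_zero]; positivity
  have h6 := h2.div h4 h5
  rwa [deriv_form a l hl] at h6

lemma hasSum_int (x : ℝ) (hne : x ≠ (⌊x⌋ : ℝ)) (l : ℝ) (hl : 0 < l) :
    HasSum (fun n : ℤ => v l (x + n) - v l (-x - n)) (Hh (Int.fract x) l) := by
  set a := Int.fract x with ha
  have ha0 : 0 < a := Int.fract_pos.2 hne
  have ha1 : a < 1 := Int.fract_lt_one x
  have hfl : (⌊x⌋ : ℝ) = x - a := by
    have := Int.self_sub_floor x
    rw [ha]; linarith
  have hSa : HasSum (fun n : ℤ => v l (x + n))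
      (Real.exp (-(l * a)) *
        (a / (1 - Real.exp (-l)) + Real.exp (-l) / (1 - Real.exp (-l)) ^ 2)) := by
    have hinj : Function.Injective (fun k : ℕ => (k : ℤ) - ⌊x⌋) := by
      intro p q h
      simp only at h
      exact_mod_cast sub_left_inj.1 h
    refine (hinj.hasSum_iff ?_).1 ?_
    · intro n hn
      have hn' : n + ⌊x⌋ < 0 := by
        by_contra hcon
        push_neg at hcon
        exact hn ⟨(n + ⌊x⌋).toNat, by simp [Int.toNat_of_nonneg hcon]⟩
      have hcast : ((n : ℝ)) + (⌊x⌋ : ℝ) ≤ -1 := by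
        have : n + ⌊x⌋ ≤ -1 := by omega
        exact_mod_cast this
      have hneg : x + (n : ℝ) < 0 := by
        rw [hfl] at hcast; linarith
      simp [v, not_lt.2 hneg.le]
    · have hN := hasSum_nat_aux a l hl
      have hfeq : ((fun n : ℤ => v l (x + n)) ∘ fun k : ℕ => (k : ℤ) - ⌊x⌋) =
          fun k : ℕ => (a + k) * Real.exp (-l * (a + k)) := by
        funext k
        have harg : x + (((k : ℤ) - ⌊x⌋ : ℤ) : ℝ) = a + k := by
          push_cast
          rw [hfl]; ring
        show v l (x + (((k : ℤ) - ⌊x⌋ : ℤ) : ℝ)) = _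
        rw [harg]
        have hpos : (0:ℝ) < a + k := by
          have : (0:ℝ) ≤ (k : ℝ) := Nat.cast_nonneg k
          linarith
        simp [v, hpos]
      rw [hfeq]
      exact hN
  have hSb : HasSum (fun n : ℤ => v l (-x - n))
      (Real.exp (-(l * (1 - a))) *
        ((1 - a) / (1 - Real.exp (-l)) + Real.exp (-l) / (1 - Real.exp (-l)) ^ 2)) := by
    have hinj : Function.Injective (fun k : ℕ => -⌊x⌋ - 1 - (k : ℤ)) := by
      intro p q h
      simp only at h
      omega
    refine (hinj.hasSum_iff ?_).1 ?_
    · intro n hn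
      have hn' : -⌊x⌋ ≤ n := by
        by_contra hcon
        push_neg at hcon
        exact hn ⟨(-⌊x⌋ - 1 - n).toNat, by
          have h1 : 0 ≤ -⌊x⌋ - 1 - n := by omega
          simp [Int.toNat_of_nonneg h1]⟩
      have hcast : -(⌊x⌋ : ℝ) ≤ (n : ℝ) := by exact_mod_cast hn'
      have hneg : -x - (n : ℝ) < 0 := by
        rw [hfl] at hcast; linarith
      simp [v, not_lt.2 hneg.le]
    · have hN := hasSum_nat_aux (1 - a) l hl
      have hfeq : ((fun n : ℤ => v l (-x - n)) ∘ fun k : ℕ => -⌊x⌋ - 1 - (k : ℤ)) =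
          fun k : ℕ => ((1 - a) + k) * Real.exp (-l * ((1 - a) + k)) := by
        funext k
        have harg : -x - ((-⌊x⌋ - 1 - (k : ℤ) : ℤ) : ℝ) = (1 - a) + k := by
          push_cast
          rw [hfl]; ring
        show v l (-x - ((-⌊x⌋ - 1 - (k : ℤ) : ℤ) : ℝ)) = _
        rw [harg]
        have hpos : (0:ℝ) < (1 - a) + k := by
          have : (0:ℝ) ≤ (k : ℝ) := Nat.cast_nonneg k
          linarith
        simp [v, hpos]
      rw [hfeq]
      exact hN
  have := hSa.sub hSb
  rwa [closed_form a l hl] at this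

lemma sinh_half_ge (l : ℝ) (hl : 1 ≤ l) : Real.exp (l / 2) / 4 ≤ Real.sinh (l / 2) := by
  rw [Real.sinh_eq, Real.exp_neg]
  have hY2 : Real.exp (l / 2) ^ 2 = Real.exp l := by rw [sq, ← Real.exp_add]; norm_num
  have h2 : (2:ℝ) ≤ Real.exp l := by
    have h3 := Real.add_one_le_exp (1:ℝ)
    have h4 := Real.exp_le_exp.2 hl
    linarith
  have hY0 : (0:ℝ) < Real.exp (l / 2) := Real.exp_pos _
  have hY2' : 2 ≤ Real.exp (l / 2) ^ 2 := by rw [hY2]; exact h2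
  have key : (Real.exp (l / 2) - 2 * (Real.exp (l / 2))⁻¹) * Real.exp (l / 2)
      = Real.exp (l / 2) ^ 2 - 2 := by
    field_simp
  nlinarith [key, hY2', hY0]

lemma abs_Hh_le_one (a l : ℝ) (ha0 : 0 < a) (ha1 : a < 1) (hl0 : 0 < l) (hl1 : l ≤ 1) :
    |Hh a l| ≤ 1 := by
  have hb0 : (0:ℝ) < 1 - a := by linarith
  have h1 := abs_sinh_sub_self_le (y := l * (1 - a)) (by positivity) (by nlinarith)
  have h2 := abs_sinh_sub_self_le (y := l * a) (by positivity) (by nlinarith)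
  have hnum : |a * Real.sinh (l * (1 - a)) - (1 - a) * Real.sinh (l * a)| ≤ 2 / 9 * l ^ 3 := by
    have e : a * Real.sinh (l * (1 - a)) - (1 - a) * Real.sinh (l * a)
        = a * (Real.sinh (l * (1 - a)) - l * (1 - a)) - (1 - a) * (Real.sinh (l * a) - l * a) := by
      ring
    rw [e]
    calc |a * (Real.sinh (l * (1 - a)) - l * (1 - a)) - (1 - a) * (Real.sinh (l * a) - l * a)|
        ≤ |a * (Real.sinh (l * (1 - a)) - l * (1 - a))| + |(1 - a) * (Real.sinh (l * a) - l * a)| :=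
          abs_sub _ _
      _ = a * |Real.sinh (l * (1 - a)) - l * (1 - a)| + (1 - a) * |Real.sinh (l * a) - l * a| := by
          rw [abs_mul, abs_mul, abs_of_pos ha0, abs_of_pos hb0]
      _ ≤ a * (2 / 9 * (l * (1 - a)) ^ 3) + (1 - a) * (2 / 9 * (l * a) ^ 3) :=
          add_le_add (mul_le_mul_of_nonneg_left h1 ha0.le) (mul_le_mul_of_nonneg_left h2 hb0.le)
      _ ≤ 2 / 9 * l ^ 3 := by
          nlinarith [mul_pos ha0 hb0, sq_nonneg (a - (1 - a)), pow_pos hl0 3,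
            sq_nonneg (1 - 2 * (a * (1 - a))), sq_nonneg (a * (1 - a))]
  have hs : l / 2 < Real.sinh (l / 2) := Real.self_lt_sinh_iff.2 (by linarith)
  have hden0 : 0 < 2 * Real.sinh (l / 2) ^ 2 := by nlinarith
  rw [Hh, abs_div, abs_of_pos hden0, div_le_one hden0]
  nlinarith [hnum, hs, pow_pos hl0 2, pow_pos hl0 3]

lemma abs_Hh_le_exp (a l : ℝ) (ha0 : 0 < a) (ha1 : a < 1) (hl : 1 ≤ l) :
    |Hh a l| ≤ 4 * Real.exp (-(1 - max a (1 - a)) * l) := by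
  have hl0 : 0 < l := by linarith
  set m := max a (1 - a) with hm
  have hm1 : m < 1 := max_lt ha1 (by linarith)
  have hm0 : 0 < m := lt_of_lt_of_le ha0 (le_max_left _ _)
  have hs1 : Real.sinh (l * (1 - a)) ≤ Real.sinh (l * m) := by
    apply Real.sinh_le_sinh.2
    have := le_max_right a (1 - a)
    nlinarith
  have hs2 : Real.sinh (l * a) ≤ Real.sinh (l * m) := by
    apply Real.sinh_le_sinh.2
    have := le_max_left a (1 - a)
    nlinarith
  have hp1 : 0 < Real.sinh (l * (1 - a)) := Real.sinh_pos_iff.2 (by nlinarith)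
  have hp2 : 0 < Real.sinh (l * a) := Real.sinh_pos_iff.2 (by nlinarith)
  have hpm : 0 < Real.sinh (l * m) := Real.sinh_pos_iff.2 (by nlinarith)
  have hnum : |a * Real.sinh (l * (1 - a)) - (1 - a) * Real.sinh (l * a)| ≤ Real.sinh (l * m) := by
    rw [abs_sub_le_iff]
    constructor <;> nlinarith
  have hsinh_le : Real.sinh (l * m) ≤ Real.exp (l * m) / 2 := by
    rw [Real.sinh_eq]
    have := Real.exp_pos (-(l * m))
    linarith
  have hden := sinh_half_ge l hl
  have hY2 : Real.exp (l / 2) ^ 2 = Real.exp l := by rw [sq, ← Real.exp_add]; norm_num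
  have hs : 0 < Real.sinh (l / 2) := Real.sinh_pos_iff.2 (by linarith)
  have hden0 : 0 < 2 * Real.sinh (l / 2) ^ 2 := by nlinarith
  have hsq : Real.exp l / 8 ≤ 2 * Real.sinh (l / 2) ^ 2 := by
    nlinarith [hden, Real.exp_pos (l / 2), hY2]
  have hE : Real.exp (-(1 - m) * l) * Real.exp l = Real.exp (l * m) := by
    rw [← Real.exp_add]; congr 1; ring
  rw [Hh, abs_div, abs_of_pos hden0, div_le_iff₀ hden0]
  nlinarith [hnum, hsinh_le, hsq, Real.exp_pos (-(1 - m) * l), hE, Real.exp_pos l]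

lemma integrable_Hh (a : ℝ) (ha0 : 0 < a) (ha1 : a < 1) :
    MeasureTheory.IntegrableOn (fun l => Hh a l) (Set.Ioi (0:ℝ)) := by
  have hunion : Set.Ioc (0:ℝ) 1 ∪ Set.Ioi 1 = Set.Ioi 0 := Set.Ioc_union_Ioi_eq_Ioi zero_le_one
  rw [← hunion]
  have hcont : ∀ l : ℝ, 0 < l → ContinuousAt (fun l => Hh a l) l := by
    intro l hl
    have hs : (0:ℝ) < Real.sinh (l / 2) := Real.sinh_pos_iff.2 (by linarith)
    have h1 : ContinuousAt (fun l : ℝ => a * Real.sinh (l * (1 - a)) - (1 - a) * Real.sinh (l * a)) l := by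
      fun_prop
    have h2 : ContinuousAt (fun l : ℝ => 2 * Real.sinh (l / 2) ^ 2) l := by fun_prop
    exact h1.div h2 (by nlinarith)
  apply MeasureTheory.IntegrableOn.union
  · refine MeasureTheory.Integrable.mono' (integrable_const 1) ?_ ?_
    · refine ContinuousOn.aestronglyMeasurable ?_ measurableSet_Ioc
      intro l hl
      exact (hcont l hl.1).continuousWithinAt
    · filter_upwards [MeasureTheory.ae_restrict_mem measurableSet_Ioc] with l hl
      simpa [Real.norm_eq_abs] using abs_Hh_le_one a l ha0 ha1 hl.1 hl.2
  · have hm1 : max a (1 - a) < 1 := max_lt ha1 (by linarith)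
    have hcm : 0 < 1 - max a (1 - a) := by linarith
    refine MeasureTheory.Integrable.mono'
      ((exp_neg_integrableOn_Ioi 1 hcm).const_mul 4) ?_ ?_
    · refine ContinuousOn.aestronglyMeasurable ?_ measurableSet_Ioi
      intro l hl
      exact (hcont l (lt_trans one_pos hl)).continuousWithinAt
    · filter_upwards [MeasureTheory.ae_restrict_mem measurableSet_Ioi] with l hl
      simpa [Real.norm_eq_abs] using abs_Hh_le_exp a l ha0 ha1 hl.le

/-- The antiderivative, extended continuously to `0`. -/
noncomputable def Gg (a : ℝ) : ℝ → ℝ := fun l =>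
  if l ≤ 0 then -(2 * (a - 1/2)) else Real.sinh (-(l * (a - 1/2))) / Real.sinh (l / 2)

lemma Gg_zero (a : ℝ) : Gg a 0 = -(2 * (a - 1/2)) := by simp [Gg]

lemma Gg_pos (a : ℝ) {l : ℝ} (hl : 0 < l) :
    Gg a l = Real.sinh (-(l * (a - 1/2))) / Real.sinh (l / 2) := by
  simp [Gg, not_le.2 hl]

lemma tendsto_top (a : ℝ) (ha0 : 0 < a) (ha1 : a < 1) :
    Filter.Tendsto (Gg a) Filter.atTop (nhds 0) := by
  have hσ : |a - 1/2| < 1/2 := abs_lt.2 ⟨by linarith, by linarith⟩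
  set c : ℝ := 1/2 - |a - 1/2| with hc
  have hcpos : 0 < c := by rw [hc]; linarith
  apply squeeze_zero_norm' (a := fun l : ℝ => 2 * Real.exp (-(c * l)))
  · filter_upwards [Filter.eventually_ge_atTop (1:ℝ)] with l hl
    have hl0 : 0 < l := by linarith
    rw [Gg_pos a hl0]
    have hs : 0 < Real.sinh (l / 2) := Real.sinh_pos_iff.2 (by linarith)
    have hden := sinh_half_ge l hl
    have habs : |Real.sinh (-(l * (a - 1/2)))| = Real.sinh (l * |a - 1/2|) := by
      rw [Real.abs_sinh]
      congr 1
      rw [abs_neg, abs_mul, abs_of_pos hl0]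
    have hnum : |Real.sinh (-(l * (a - 1/2)))| ≤ Real.exp (l * |a - 1/2|) / 2 := by
      rw [habs, Real.sinh_eq]
      have := Real.exp_pos (-(l * |a - 1/2|))
      linarith
    rw [Real.norm_eq_abs, abs_div, abs_of_pos hs]
    have hY0 : (0:ℝ) < Real.exp (l / 2) := Real.exp_pos _
    have hquo : Real.exp (l * |a - 1/2|) / Real.exp (l / 2) = Real.exp (-(c * l)) := by
      rw [← Real.exp_sub]
      congr 1
      rw [hc]; ring
    have key : Real.exp (l * |a - 1/2|) / 2 / (Real.exp (l / 2) / 4)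
        = 2 * Real.exp (-(c * l)) := by
      rw [← hquo]
      field_simp
      ring
    calc |Real.sinh (-(l * (a - 1/2)))| / Real.sinh (l / 2)
        ≤ (Real.exp (l * |a - 1/2|) / 2) / (Real.exp (l / 2) / 4) :=
          div_le_div₀ (by positivity) hnum (by positivity) hden
      _ = 2 * Real.exp (-(c * l)) := key
  · have h1 : Filter.Tendsto (fun l : ℝ => c * l) Filter.atTop Filter.atTop :=
      (Filter.tendsto_const_mul_atTop_of_pos hcpos).2 Filter.tendsto_id
    have h3 := Real.tendsto_exp_neg_atTop_nhds_zero.comp h1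
    have h4 := h3.const_mul (2:ℝ)
    simpa [Function.comp] using h4

lemma tendsto_right (a : ℝ) :
    Filter.Tendsto (fun l : ℝ => Real.sinh (-(l * (a - 1/2))) / Real.sinh (l / 2))
      (nhdsWithin 0 (Set.Ioi 0)) (nhds (-(2 * (a - 1/2)))) := by
  have h1 : HasDerivAt (fun t : ℝ => -(t * (a - 1/2))) (-(a - 1/2)) 0 := by
    exact ((hasDerivAt_id (0:ℝ)).mul_const (a - 1/2)).neg.congr_deriv (by ring)
  have hnum : HasDerivAt (fun l : ℝ => Real.sinh (-(l * (a - 1/2)))) (-(a - 1/2)) 0 := by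
    have h2 : HasDerivAt (fun l : ℝ => Real.sinh (-(l * (a - 1/2))))
        (Real.cosh (-(0 * (a - 1/2))) * (-(a - 1/2))) 0 := (Real.hasDerivAt_sinh _).comp 0 h1
    have he : Real.cosh (-(0 * (a - 1/2))) * (-(a - 1/2)) = -(a - 1/2) := by
      norm_num
    rwa [he] at h2
  have h3 : HasDerivAt (fun t : ℝ => t / 2) ((1:ℝ)/2) 0 := by
    simpa using (hasDerivAt_id (0:ℝ)).div_const 2
  have hden : HasDerivAt (fun l : ℝ => Real.sinh (l / 2)) ((1:ℝ)/2) 0 := by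
    have h4 : HasDerivAt (fun l : ℝ => Real.sinh (l / 2))
        (Real.cosh ((0:ℝ) / 2) * (1/2)) 0 := (Real.hasDerivAt_sinh _).comp 0 h3
    have he : Real.cosh ((0:ℝ) / 2) * (1/2) = (1:ℝ)/2 := by norm_num
    rwa [he] at h4
  have t1 := hasDerivAt_iff_tendsto_slope.1 hnum
  have t2 := hasDerivAt_iff_tendsto_slope.1 hden
  have hmono : nhdsWithin (0:ℝ) (Set.Ioi 0) ≤ nhdsWithin 0 {(0:ℝ)}ᶜ :=
    nhdsWithin_mono 0 (fun y hy => ne_of_gt hy)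
  have t1' := t1.mono_left hmono
  have t2' := t2.mono_left hmono
  have hdiv := t1'.div t2' (by norm_num)
  have hval : (-(a - 1/2)) / ((1:ℝ)/2) = -(2 * (a - 1/2)) := by ring
  rw [hval] at hdiv
  refine hdiv.congr' ?_
  filter_upwards [self_mem_nhdsWithin] with l (hl : 0 < l)
  have hl0 : l ≠ 0 := ne_of_gt hl
  simp only [Pi.div_apply]
  rw [slope_def_field, slope_def_field]
  norm_num
  exact div_div_div_cancel_right₀ hl0 _ _

end Stmt16Aux

/-- For `λ > 0` and `x ∉ ℤ`, the periodization
`h̃(λ,x) = Σ_{n∈ℤ} (v(λ,x+n) - v(λ,-x-n))` equals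
`-∂/∂λ ( sinh(-λ(x - ⌊x⌋ - 1/2)) / sinh(λ/2) )`, and consequently
`∫_0^∞ h̃(λ,x) dλ = -2(x - ⌊x⌋ - 1/2)`: the periodization of `sgn` recovers `-2` times
the sawtooth function. -/
theorem stmt16 (x : ℝ) (hx : ¬∃ n : ℤ, x = n) :
    (∀ lam : ℝ, 0 < lam →
      HasDerivAt (fun l : ℝ => Real.sinh (-(l * (x - (⌊x⌋ : ℝ) - 1/2))) / Real.sinh (l / 2))
        (-(∑' n : ℤ, (v lam (x + n) - v lam (-x - n)))) lam) ∧
    (∫ lam in Set.Ioi (0:ℝ), ∑' n : ℤ, (v lam (x + n) - v lam (-x - n))) =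
      -2 * (x - (⌊x⌋ : ℝ) - 1/2) := by
  have hne : x ≠ (⌊x⌋ : ℝ) := fun h => hx ⟨⌊x⌋, h⟩
  set a := Int.fract x with ha
  have ha0 : 0 < a := Int.fract_pos.2 hne
  have ha1 : a < 1 := Int.fract_lt_one x
  have hfr : x - (⌊x⌋ : ℝ) = a := Int.self_sub_floor x
  constructor
  · intro lam hlam
    have ht : (∑' n : ℤ, (v lam (x + n) - v lam (-x - n))) = Stmt16Aux.Hh a lam :=
      (Stmt16Aux.hasSum_int x hne lam hlam).tsum_eq
    rw [ht, hfr]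
    exact Stmt16Aux.hasDeriv_g a lam hlam
  · rw [hfr]
    rw [MeasureTheory.setIntegral_congr_fun measurableSet_Ioi
      (fun l hl => (Stmt16Aux.hasSum_int x hne l hl).tsum_eq)]
    have hint : MeasureTheory.IntegrableOn (fun l => -(Stmt16Aux.Hh a l)) (Set.Ioi (0:ℝ)) :=
      (Stmt16Aux.integrable_Hh a ha0 ha1).neg
    have hderiv : ∀ l ∈ Set.Ioi (0:ℝ), HasDerivAt (Stmt16Aux.Gg a) (-(Stmt16Aux.Hh a l)) l := by
      intro l hl
      have hg := Stmt16Aux.hasDeriv_g a l hl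
      exact hg.congr_of_eventuallyEq (by
        filter_upwards [Ioi_mem_nhds hl] with t ht
        exact Stmt16Aux.Gg_pos a ht)
    have hcont : ContinuousWithinAt (Stmt16Aux.Gg a) (Set.Ici (0:ℝ)) 0 := by
      rw [← continuousWithinAt_diff_self, Set.Ici_sdiff_left]
      have heq : (fun l : ℝ => Real.sinh (-(l * (a - 1/2))) / Real.sinh (l / 2))
          =ᶠ[nhdsWithin 0 (Set.Ioi 0)] Stmt16Aux.Gg a := by
        filter_upwards [self_mem_nhdsWithin] with t (ht : 0 < t)
        exact (Stmt16Aux.Gg_pos a ht).symm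
      have h0 := (Stmt16Aux.tendsto_right a).congr' heq
      unfold ContinuousWithinAt
      rw [Stmt16Aux.Gg_zero]
      exact h0
    have htop := Stmt16Aux.tendsto_top a ha0 ha1
    have key := MeasureTheory.integral_Ioi_of_hasDerivAt_of_tendsto hcont hderiv hint htop
    rw [MeasureTheory.integral_neg, Stmt16Aux.Gg_zero] at key
    linarith [key]
end

section
/- Let L: ℂ → ℂ be an entire function of exponential type at most τ with L and L' both in L¹(ℝ). Then the periodization Σ_{n∈ℤ} L(x+n) converges for every real x and equals the trigonometric polynomial Σ_{|k| < τ/(2π)} L̂(k) e(kx), where L̂(t) = ∫ L(x)e(−tx)dx; in particular the periodization of L is a trigonometric polynomial of degree less than τ/(2π). -/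
set_option maxHeartbeats 1000000

open MeasureTheory

open Real Complex Filter Topology Asymptotics intervalIntegral
open scoped FourierTransform

/-- An entire function has exponential type at most `τ` if for every `ε > 0` it is
`O(e^{(τ+ε)|z|})`. -/
def ExpTypeLE (F : ℂ → ℂ) (τ : ℝ) : Prop :=
  ∀ ε : ℝ, 0 < ε → ∃ C : ℝ, ∀ z : ℂ, ‖F z‖ ≤ C * Real.exp ((τ + ε) * ‖z‖)

section Aux
variable {L : ℂ → ℂ}

lemma ptwise_bound (hL : Differentiable ℂ L)
    (hL1 : Integrable (fun x : ℝ => L x)) (hL'1 : Integrable (fun x : ℝ => deriv L x)) (t : ℝ) :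
    ‖L t‖ ≤ ∫ x in t..(t+1), (‖L x‖ + ‖deriv L x‖) := by
  have hcont : Continuous fun x : ℝ => ‖L x‖ :=
    (hL.continuous.comp Complex.continuous_ofReal).norm
  obtain ⟨u, hu, humin⟩ := (isCompact_Icc (a := t) (b := t + 1)).exists_isMinOn
    ⟨t, by constructor <;> linarith⟩ hcont.continuousOn
  have hInt1 : IntervalIntegrable (fun x : ℝ => ‖L x‖) volume t (t + 1) :=
    hL1.norm.intervalIntegrable
  have hInt2 : IntervalIntegrable (fun x : ℝ => ‖deriv L x‖) volume t (t + 1) :=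
    hL'1.norm.intervalIntegrable
  have h1 : ‖L u‖ ≤ ∫ x in t..(t + 1), ‖L x‖ := by
    have := integral_mono_on (f := fun _ : ℝ => ‖L u‖) (g := fun x : ℝ => ‖L x‖)
      (by linarith) intervalIntegrable_const hInt1 (fun x hx => humin hx)
    simpa using this
  have FTC : ∫ x in t..u, deriv L x = L u - L t := by
    refine integral_eq_sub_of_hasDerivAt (f := fun y : ℝ => L y) (fun x _ => ?_)
      hL'1.intervalIntegrable
    exact ((hL _).hasDerivAt).comp_ofReal
  have h2 : ‖L t‖ ≤ ‖L u‖ + ‖∫ x in t..u, deriv L x‖ := by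
    have : (L t : ℂ) = L u - ∫ x in t..u, deriv L x := by rw [FTC]; ring
    calc ‖L t‖ = ‖L u - ∫ x in t..u, deriv L x‖ := by rw [← this]
    _ ≤ ‖L u‖ + ‖∫ x in t..u, deriv L x‖ := norm_sub_le _ _
  have h3 : ‖∫ x in t..u, deriv L x‖ ≤ ∫ x in t..(t + 1), ‖deriv L x‖ := by
    calc ‖∫ x in t..u, deriv L x‖ ≤ ∫ x in t..u, ‖deriv L x‖ :=
          intervalIntegral.norm_integral_le_integral_norm hu.1
    _ ≤ ∫ x in t..(t + 1), ‖deriv L x‖ := by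
        refine integral_mono_interval le_rfl hu.1 hu.2 ?_ hInt2
        filter_upwards with x using norm_nonneg _
  rw [integral_add hInt1 hInt2]
  linarith

lemma global_bound (hL : Differentiable ℂ L)
    (hL1 : Integrable (fun x : ℝ => L x)) (hL'1 : Integrable (fun x : ℝ => deriv L x)) (t : ℝ) :
    ‖L t‖ ≤ ∫ x : ℝ, (‖L x‖ + ‖deriv L x‖) := by
  refine (ptwise_bound hL hL1 hL'1 t).trans ?_
  rw [intervalIntegral.integral_of_le (by linarith)]
  exact setIntegral_le_integral (hL1.norm.add hL'1.norm)
    (by filter_upwards with x using by positivity)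

lemma summable_d (hL1 : Integrable (fun x : ℝ => L x))
    (hL'1 : Integrable (fun x : ℝ => deriv L x)) :
    Summable fun n : ℤ => ∫ x in (n : ℝ)..((n : ℝ) + 1), (‖L x‖ + ‖deriv L x‖) := by
  have hg : Integrable (fun x : ℝ => ‖L x‖ + ‖deriv L x‖) := hL1.norm.add hL'1.norm
  have h := (hg.hasSum_intervalIntegral_comp_add_int).summable
  refine h.congr fun n => ?_
  have h2 := intervalIntegral.integral_comp_add_right (a := 0) (b := 1)
    (fun x : ℝ => ‖L x‖ + ‖deriv L x‖) (n : ℝ)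
  simp only [zero_add] at h2
  rw [show ((1 : ℝ) + n = (n : ℝ) + 1) from add_comm 1 (n:ℝ)] at h2
  exact h2

lemma sum_shift (g : ℝ → ℝ) (hg : Integrable g) (N : ℕ) (n : ℤ) :
    ∑ i ∈ Finset.range (2*N+2),
        ∫ x in ((n + ((i:ℤ) - N) : ℤ) : ℝ)..(((n + ((i:ℤ) - N) : ℤ) : ℝ) + 1), g x
      = ∫ x in ((n:ℝ) - N)..((n:ℝ) + N + 2), g x := by
  have key := intervalIntegral.sum_integral_adjacent_intervals (f := g) (μ := volume)
    (a := fun i : ℕ => (n : ℝ) - N + i) (n := 2 * N + 2) (fun k _ => hg.intervalIntegrable)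
  refine Eq.trans ?_ (key.trans ?_)
  · refine Finset.sum_congr rfl fun k _ => ?_
    congr 1 <;> push_cast <;> ring
  · congr 1 <;> push_cast <;> ring

lemma h_norm_aux (hL : Differentiable ℂ L)
    (hL1 : Integrable (fun x : ℝ => L x)) (hL'1 : Integrable (fun x : ℝ => deriv L x))
    (K : TopologicalSpace.Compacts ℝ) :
    Summable fun n : ℤ =>
      ‖((⟨fun x : ℝ => L x, hL.continuous.comp Complex.continuous_ofReal⟩ : C(ℝ, ℂ)).comp
          (ContinuousMap.addRight (n : ℝ))).restrict K‖ := by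
  have hg : Integrable (fun x : ℝ => ‖L x‖ + ‖deriv L x‖) := hL1.norm.add hL'1.norm
  have hg0 : ∀ x : ℝ, 0 ≤ ‖L (x:ℂ)‖ + ‖deriv L (x:ℂ)‖ := fun x => by positivity
  obtain ⟨r, hr⟩ := K.isCompact.isBounded.subset_closedBall 0
  obtain ⟨N, hrN⟩ : ∃ N : ℕ, r ≤ (N : ℝ) := ⟨⌈r⌉₊, Nat.le_ceil r⟩
  have hKN : (K : Set ℝ) ⊆ Set.Icc (-(N : ℝ)) N := by
    refine hr.trans ?_
    rw [Real.closedBall_eq_Icc]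
    intro x hx
    exact ⟨by simp at hx ⊢; linarith [hx.1], by simp at hx ⊢; linarith [hx.2]⟩
  have hdsum := summable_d hL1 hL'1
  have hd0 : ∀ m : ℤ, (0:ℝ) ≤ ∫ x in (m : ℝ)..((m : ℝ) + 1), (‖L x‖ + ‖deriv L x‖) :=
    fun m => intervalIntegral.integral_nonneg (by linarith) (fun x _ => hg0 x)
  have hcsum : Summable (fun n : ℤ => ∑ i ∈ Finset.range (2*N+2),
      ∫ x in ((n + ((i:ℤ) - N) : ℤ) : ℝ)..(((n + ((i:ℤ) - N) : ℤ) : ℝ) + 1),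
        (‖L x‖ + ‖deriv L x‖)) := by
    refine summable_sum (fun i _ => ?_)
    exact hdsum.comp_injective (add_left_injective ((i : ℤ) - N))
  refine Summable.of_nonneg_of_le (fun n => norm_nonneg _) (fun n => ?_) hcsum
  rw [sum_shift _ hg]
  have hcn0 : (0:ℝ) ≤ ∫ x in ((n:ℝ) - N)..((n:ℝ) + N + 2), (‖L x‖ + ‖deriv L x‖) :=
    intervalIntegral.integral_nonneg (by push_cast; linarith) (fun x _ => hg0 x)
  rw [ContinuousMap.norm_le _ hcn0]
  rintro ⟨x, hx⟩
  have hxN := hKN hx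
  simp only [ContinuousMap.restrict_apply, ContinuousMap.comp_apply, ContinuousMap.coe_mk,
    ContinuousMap.coe_addRight]
  have h1 : ‖L ((x + n : ℝ) : ℂ)‖ ≤ ∫ y in (x + (n:ℝ))..(x + (n:ℝ) + 1), (‖L y‖ + ‖deriv L y‖) :=
    ptwise_bound hL hL1 hL'1 _
  refine h1.trans ?_
  refine intervalIntegral.integral_mono_interval ?_ ?_ ?_ ?_ hg.intervalIntegrable
  · have := hxN.1; linarith
  · linarith
  · have := hxN.2; linarith
  · filter_upwards with y using hg0 y

end Aux

lemma halfplane_bound {L : ℂ → ℂ} {τ : ℝ} (hL : Differentiable ℂ L) (htype : ExpTypeLE L τ)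
    {M : ℝ} (hM : ∀ x : ℝ, ‖L x‖ ≤ M) {a : ℝ} (ha : τ < a) :
    ∃ K : ℝ, 0 ≤ K ∧ ∀ z : ℂ, 0 ≤ z.im → ‖L z‖ ≤ K * Real.exp (a * z.im) := by
  set ε : ℝ := (a - τ) / 2 with hε
  have hε0 : 0 < ε := by rw [hε]; linarith
  obtain ⟨C, hC⟩ := htype ε hε0
  have hC0 : 0 ≤ C := by
    have := hC 0
    simp at this
    exact le_trans (norm_nonneg _) this
  set g : ℂ → ℂ := fun z => L z * Complex.exp (Complex.I * a * z) with hg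
  have hgnorm : ∀ z : ℂ, ‖g z‖ = ‖L z‖ * Real.exp (-(a * z.im)) := by
    intro z
    have hre : (Complex.I * (a:ℂ) * z).re = -(a * z.im) := by
      simp [Complex.mul_re, Complex.mul_im]
    rw [hg]
    simp only [norm_mul, Complex.norm_exp, hre]
  have hgd : Differentiable ℂ g := hL.mul (Complex.differentiable_exp.comp (by fun_prop))
  have hexp : ∀ (S : Set ℂ), ∃ c < (2:ℝ), ∃ B, g =O[Bornology.cobounded ℂ ⊓ 𝓟 S]
      fun z => Real.exp (B * ‖z‖ ^ (c:ℝ)) := by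
    intro S
    refine ⟨1, by norm_num, (τ + ε) + |a|, ?_⟩
    refine IsBigO.of_bound C ?_
    filter_upwards with z
    have h3 : Real.exp (-(a * z.im)) ≤ Real.exp (|a| * ‖z‖) := by
      apply Real.exp_le_exp.2
      calc -(a * z.im) ≤ |a * z.im| := neg_le_abs _
      _ = |a| * |z.im| := abs_mul _ _
      _ ≤ |a| * ‖z‖ := by
          have := Complex.abs_im_le_norm z
          exact mul_le_mul_of_nonneg_left (by simpa using this)
            (abs_nonneg a)
    have hb : ‖g z‖ ≤ C * Real.exp (((τ + ε) + |a|) * ‖z‖ ^ (1:ℝ)) := by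
      rw [hgnorm z, Real.rpow_one]
      have h2 := hC z
      have h4 := mul_le_mul h2 h3 (Real.exp_pos _).le (by positivity)
      refine h4.trans (le_of_eq ?_)
      rw [mul_assoc, ← Real.exp_add]
      congr 2
      ring
    simpa [Real.norm_eq_abs, abs_of_pos (Real.exp_pos _)] using hb
  have hgre : ∀ x : ℝ, ‖g x‖ ≤ max M C := by
    intro x
    rw [hgnorm]
    simp only [Complex.ofReal_im, mul_zero, neg_zero, Real.exp_zero, mul_one]
    exact (hM x).trans (le_max_left _ _)
  have hgim : ∀ x : ℝ, 0 ≤ x → ‖g (x * Complex.I)‖ ≤ max M C := by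
    intro x hx
    rw [hgnorm]
    have him : ((x : ℂ) * Complex.I).im = x := by simp
    rw [him]
    have h2 : ‖L ((x:ℂ) * Complex.I)‖ ≤ C * Real.exp ((τ + ε) * x) := by
      have := hC ((x:ℂ) * Complex.I)
      simpa [norm_mul, Complex.norm_I, Complex.norm_real, Real.norm_eq_abs,
        _root_.abs_of_nonneg hx] using this
    calc ‖L ((x:ℂ) * Complex.I)‖ * Real.exp (-(a * x))
        ≤ (C * Real.exp ((τ + ε) * x)) * Real.exp (-(a * x)) :=
          mul_le_mul_of_nonneg_right h2 (Real.exp_pos _).le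
    _ = C * Real.exp (-(ε * x)) := by
        rw [mul_assoc, ← Real.exp_add]
        congr 2
        rw [hε]; ring
    _ ≤ C * 1 := by
        refine mul_le_mul_of_nonneg_left ?_ hC0
        rw [Real.exp_le_one_iff]
        simp
        positivity
    _ ≤ max M C := by rw [mul_one]; exact le_max_right _ _
  have key : ∀ z : ℂ, 0 ≤ z.im → ‖g z‖ ≤ max M C := by
    intro z hz
    rcases le_total 0 z.re with hre | hre
    · exact PhragmenLindelof.quadrant_I (hgd.diffContOnCl) (by
        obtain ⟨c, hc, B, hB⟩ := hexp (Set.Ioi 0 ×ℂ Set.Ioi 0)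
        exact ⟨c, hc, B, hB⟩) (fun x hx => hgre x) hgim hre hz
    · exact PhragmenLindelof.quadrant_II (hgd.diffContOnCl) (by
        obtain ⟨c, hc, B, hB⟩ := hexp (Set.Iio 0 ×ℂ Set.Ioi 0)
        exact ⟨c, hc, B, hB⟩) (fun x hx => hgre x) hgim hre hz
  refine ⟨max M C, le_trans hC0 (le_max_right _ _), fun z hz => ?_⟩
  have := key z hz
  rw [hgnorm] at this
  have hpos : (0:ℝ) < Real.exp (-(a * z.im)) := Real.exp_pos _
  calc ‖L z‖ = (‖L z‖ * Real.exp (-(a * z.im))) * Real.exp (a * z.im) := by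
        rw [mul_assoc, ← Real.exp_add]; simp
  _ ≤ max M C * Real.exp (a * z.im) :=
      mul_le_mul_of_nonneg_right this (Real.exp_pos _).le

lemma contour_shift (G : ℂ → ℂ) (hG : Differentiable ℂ G) {y : ℝ} (hy : 0 ≤ y)
    {c C : ℝ} (hc : 0 < c)
    (hbd : ∀ x t : ℝ, t ∈ Set.Icc 0 y → ‖G (x + t * Complex.I)‖ ≤ C * Real.exp (-c * x ^ 2)) :
    (∫ x : ℝ, G x) = ∫ x : ℝ, G (x + y * Complex.I) := by
  have hGcont := hG.continuous
  have hbd0 : ∀ x : ℝ, ‖G x‖ ≤ C * Real.exp (-c * x ^ 2) := fun x => by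
    have := hbd x 0 ⟨le_rfl, hy⟩
    simpa using this
  have hbdy : ∀ x : ℝ, ‖G (x + y * Complex.I)‖ ≤ C * Real.exp (-c * x ^ 2) := fun x =>
    hbd x y ⟨hy, le_rfl⟩
  have hdom : Integrable (fun x : ℝ => C * Real.exp (-c * x ^ 2)) :=
    (integrable_exp_neg_mul_sq hc).const_mul C
  have hint0 : Integrable (fun x : ℝ => G x) := by
    refine hdom.mono' ((hGcont.comp Complex.continuous_ofReal).aestronglyMeasurable) ?_
    filter_upwards with x using hbd0 x
  have hinty : Integrable (fun x : ℝ => G (x + y * Complex.I)) := by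
    refine hdom.mono' ((hGcont.comp (by fun_prop)).aestronglyMeasurable) ?_
    filter_upwards with x using hbdy x
  -- rectangle identity
  have rect : ∀ R : ℝ,
      (∫ x in (-R)..R, G x) - (∫ x in (-R)..R, G (x + y * Complex.I)) =
        Complex.I • (∫ t in (0:ℝ)..y, G (-R + t * Complex.I)) -
          Complex.I • (∫ t in (0:ℝ)..y, G (R + t * Complex.I)) := by
    intro R
    have h := Complex.integral_boundary_rect_eq_zero_of_differentiableOn G
      (-R : ℝ) ((R : ℝ) + y * Complex.I)
      (hG.differentiableOn)
    simp only [Complex.ofReal_re, Complex.ofReal_im, Complex.add_re, Complex.add_im,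
      Complex.mul_re, Complex.mul_im, Complex.I_re, Complex.I_im, Complex.ofReal_neg,
      Complex.neg_re, Complex.neg_im] at h
    norm_num at h
    -- h : (∫ x in -R..R, G x) - (∫ x in -R..R, G (x + y*I)) + I • ∫ t in 0..y, G (R + t*I)
    --      - I • ∫ t in 0..y, G (-R + t*I) = 0
    simp only [smul_eq_mul]
    linear_combination h
  have hside : ∀ R : ℝ, ∀ s : ℝ, s ^ 2 = R ^ 2 →
      ‖Complex.I • (∫ t in (0:ℝ)..y, G (s + t * Complex.I))‖ ≤ (C * Real.exp (-c * R ^ 2)) * y := by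
    intro R s hs
    rw [norm_smul, Complex.norm_I, one_mul]
    have := intervalIntegral.norm_integral_le_of_norm_le_const (C := C * Real.exp (-c * R ^ 2))
      (f := fun t => G (s + t * Complex.I)) (a := 0) (b := y) ?_
    · simpa [_root_.abs_of_nonneg hy, neg_mul] using this
    · intro t ht
      have ht' : t ∈ Set.Icc 0 y := by
        rw [Set.uIoc_of_le hy] at ht
        exact ⟨ht.1.le, ht.2⟩
      have := hbd s t ht'
      rwa [hs] at this
  have htend1 : Tendsto (fun R : ℝ => ∫ x in (-R)..R, G x) atTop (nhds (∫ x : ℝ, G x)) :=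
    intervalIntegral_tendsto_integral hint0 tendsto_neg_atTop_atBot tendsto_id
  have htend2 : Tendsto (fun R : ℝ => ∫ x in (-R)..R, G (x + y * Complex.I)) atTop
      (nhds (∫ x : ℝ, G (x + y * Complex.I))) :=
    intervalIntegral_tendsto_integral hinty tendsto_neg_atTop_atBot tendsto_id
  have hzero : Tendsto (fun R : ℝ =>
      (∫ x in (-R)..R, G x) - (∫ x in (-R)..R, G (x + y * Complex.I))) atTop (nhds 0) := by
    refine squeeze_zero_norm' (a := fun R : ℝ => 2 * y * (C * Real.exp (-c * R ^ 2))) ?_ ?_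
    · filter_upwards with R
      rw [rect R]
      calc ‖_ - _‖ ≤ ‖Complex.I • (∫ t in (0:ℝ)..y, G (-R + t * Complex.I))‖ +
            ‖Complex.I • (∫ t in (0:ℝ)..y, G (R + t * Complex.I))‖ := norm_sub_le _ _
      _ ≤ (C * Real.exp (-c * R ^ 2)) * y + (C * Real.exp (-c * R ^ 2)) * y := by
          gcongr
          · have := hside R (-R) (by ring)
            rwa [Complex.ofReal_neg] at this
          · exact hside R R rfl
      _ = 2 * y * (C * Real.exp (-c * R ^ 2)) := by ring
    · have : Tendsto (fun R : ℝ => Real.exp (-c * R ^ 2)) atTop (nhds 0) := by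
        have h1 : Tendsto (fun R : ℝ => -c * R ^ 2) atTop atBot := by
          apply Tendsto.const_mul_atTop_of_neg (by simpa using hc)
          exact tendsto_pow_atTop (by norm_num)
        exact Real.tendsto_exp_atBot.comp h1
      have := (this.const_mul (2 * y * C))
      simpa [mul_assoc] using this
  have h0 := tendsto_nhds_unique (htend1.sub htend2) hzero
  exact sub_eq_zero.mp h0

lemma vanish_neg {L : ℂ → ℂ} {τ : ℝ} (hL : Differentiable ℂ L) (htype : ExpTypeLE L τ)
    {M : ℝ} (hM : ∀ x : ℝ, ‖L x‖ ≤ M)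
    (hL1 : Integrable (fun x : ℝ => L x)) {ξ : ℝ} (hξ : 2 * π * ξ + τ < 0) :
    𝓕 (fun x : ℝ => L x) ξ = 0 := by
  set a : ℝ := (τ - 2 * π * ξ) / 2 with hadef
  have ha : τ < a := by rw [hadef]; linarith
  set b : ℝ := -(a + 2 * π * ξ) with hbdef
  have hb : 0 < b := by rw [hbdef, hadef]; linarith
  obtain ⟨K, hK0, hK⟩ := halfplane_bound hL htype hM ha
  -- the Gaussian-damped family
  set G : ℝ → ℂ → ℂ := fun δ z => L z * Complex.exp (-(δ:ℂ) * z ^ 2 - 2 * π * Complex.I * ξ * z)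
    with hGdef
  have hGd : ∀ δ : ℝ, Differentiable ℂ (G δ) := by
    intro δ
    apply hL.mul
    apply Complex.differentiable_exp.comp
    fun_prop
  have hGnorm : ∀ δ x t : ℝ, ‖G δ (x + t * Complex.I)‖ =
      ‖L (x + t * Complex.I)‖ * Real.exp (-(δ * (x ^ 2 - t ^ 2)) + 2 * π * ξ * t) := by
    intro δ x t
    have hre : ((-(δ:ℂ)) * ((x:ℂ) + t * Complex.I) ^ 2
        - 2 * π * Complex.I * ξ * ((x:ℂ) + t * Complex.I)).re
        = -(δ * (x ^ 2 - t ^ 2)) + 2 * π * ξ * t := by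
      simp only [pow_two, Complex.sub_re, Complex.mul_re, Complex.mul_im, Complex.add_re,
        Complex.add_im, Complex.ofReal_re, Complex.ofReal_im, Complex.I_re, Complex.I_im,
        Complex.neg_re, Complex.neg_im, Complex.re_ofNat, Complex.im_ofNat]
      ring
    rw [hGdef]
    simp only [norm_mul, Complex.norm_exp, hre]
  -- strip bound
  have hstrip : ∀ δ : ℝ, 0 < δ → ∀ y : ℝ, 0 ≤ y → ∀ x t : ℝ, t ∈ Set.Icc 0 y →
      ‖G δ ((x:ℂ) + t * Complex.I)‖ ≤ (K * Real.exp (δ * y ^ 2)) * Real.exp (-δ * x ^ 2) := by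
    intro δ hδ y hy x t ht
    rw [hGnorm]
    have h1 : ‖L ((x:ℂ) + t * Complex.I)‖ ≤ K * Real.exp (a * t) := by
      have := hK ((x:ℂ) + t * Complex.I) (by simp [ht.1])
      simpa using this
    calc ‖L ((x:ℂ) + t * Complex.I)‖ * Real.exp (-(δ * (x ^ 2 - t ^ 2)) + 2 * π * ξ * t)
        ≤ (K * Real.exp (a * t)) * Real.exp (-(δ * (x ^ 2 - t ^ 2)) + 2 * π * ξ * t) :=
          mul_le_mul_of_nonneg_right h1 (Real.exp_pos _).le
    _ = K * Real.exp ((a + 2 * π * ξ) * t + δ * t ^ 2 + -δ * x ^ 2) := by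
        rw [mul_assoc, ← Real.exp_add]; congr 2; ring
    _ ≤ K * Real.exp (δ * y ^ 2 + -δ * x ^ 2) := by
        refine mul_le_mul_of_nonneg_left (Real.exp_le_exp.2 ?_) hK0
        have h2 : (a + 2 * π * ξ) * t ≤ 0 :=
          mul_nonpos_of_nonpos_of_nonneg (by rw [hbdef] at hb; linarith) ht.1
        have h3 : δ * t ^ 2 ≤ δ * y ^ 2 := by
          apply mul_le_mul_of_nonneg_left _ hδ.le
          have := ht.1; have := ht.2; nlinarith
        linarith
    _ = (K * Real.exp (δ * y ^ 2)) * Real.exp (-δ * x ^ 2) := by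
        rw [mul_assoc, ← Real.exp_add]
  -- integrability of the real restrictions
  have hGcont : ∀ δ : ℝ, Continuous fun x : ℝ => G δ x :=
    fun δ => (hGd δ).continuous.comp Complex.continuous_ofReal
  have hGint : ∀ δ : ℝ, 0 < δ → Integrable (fun x : ℝ => G δ x) := by
    intro δ hδ
    refine ((integrable_exp_neg_mul_sq hδ).const_mul (K * Real.exp (δ * 0 ^ 2))).mono'
      ((hGcont δ).aestronglyMeasurable) ?_
    filter_upwards with x
    have := hstrip δ hδ 0 le_rfl x 0 ⟨le_rfl, le_rfl⟩
    simpa using this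
  -- value bound at height y
  have hval : ∀ δ : ℝ, 0 < δ → ∀ y : ℝ, 0 ≤ y →
      ‖∫ x : ℝ, G δ x‖ ≤ K * Real.exp (-b * y + δ * y ^ 2) * Real.sqrt (π / δ) := by
    intro δ hδ y hy
    rw [contour_shift (G δ) (hGd δ) hy hδ (fun x t ht => hstrip δ hδ y hy x t ht)]
    have hbound : ∀ x : ℝ, ‖G δ ((x:ℂ) + y * Complex.I)‖ ≤
        (K * Real.exp (-b * y + δ * y ^ 2)) * Real.exp (-δ * x ^ 2) := by
      intro x
      rw [hGnorm]
      have h1 : ‖L ((x:ℂ) + y * Complex.I)‖ ≤ K * Real.exp (a * y) := by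
        have := hK ((x:ℂ) + y * Complex.I) (by simp [hy])
        simpa using this
      calc ‖L ((x:ℂ) + y * Complex.I)‖ * Real.exp (-(δ * (x ^ 2 - y ^ 2)) + 2 * π * ξ * y)
          ≤ (K * Real.exp (a * y)) * Real.exp (-(δ * (x ^ 2 - y ^ 2)) + 2 * π * ξ * y) :=
            mul_le_mul_of_nonneg_right h1 (Real.exp_pos _).le
      _ = K * Real.exp (a * y + (-(δ * (x ^ 2 - y ^ 2)) + 2 * π * ξ * y)) := by
          rw [mul_assoc, ← Real.exp_add]
      _ = K * Real.exp ((-b * y + δ * y ^ 2) + -δ * x ^ 2) := by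
          congr 1
          rw [Real.exp_eq_exp, hbdef]; ring
      _ = (K * Real.exp (-b * y + δ * y ^ 2)) * Real.exp (-δ * x ^ 2) := by
          rw [Real.exp_add]; ring
    have h2 := norm_integral_le_of_norm_le
      (f := fun x : ℝ => G δ ((x:ℂ) + y * Complex.I))
      (g := fun x : ℝ => (K * Real.exp (-b * y + δ * y ^ 2)) * Real.exp (-δ * x ^ 2))
      ((integrable_exp_neg_mul_sq hδ).const_mul _) (by filter_upwards with x using hbound x)
    refine h2.trans (le_of_eq ?_)
    rw [MeasureTheory.integral_const_mul, integral_gaussian]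
  -- the sequence δ n = b / (2 (n+1)), y n = n+1
  set δseq : ℕ → ℝ := fun n => b / (2 * ((n:ℝ) + 1)) with hδseq
  have hδpos : ∀ n : ℕ, 0 < δseq n := by
    intro n; rw [hδseq]; positivity
  have hδto0 : Tendsto δseq atTop (nhds 0) := by
    rw [hδseq]
    have h1 : Tendsto (fun n : ℕ => 1 / ((n:ℝ) + 1)) atTop (nhds 0) :=
      tendsto_one_div_add_atTop_nhds_zero_nat
    have := h1.const_mul (b / 2)
    simp only [mul_zero] at this
    refine this.congr fun n => ?_
    field_simp
  -- ∫ G (δseq n) tendsto J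
  have hJ : Tendsto (fun n => ∫ x : ℝ, G (δseq n) x) atTop
      (nhds (∫ x : ℝ, L x * Complex.exp (-(2 * π * Complex.I * ξ * x)))) := by
    refine tendsto_integral_of_dominated_convergence (fun x => ‖L (x:ℂ)‖)
      (fun n => (hGcont (δseq n)).aestronglyMeasurable) hL1.norm ?_ ?_
    · intro n
      filter_upwards with x
      rw [hGdef]
      simp only [norm_mul, Complex.norm_exp]
      have hre : (-(↑(δseq n) : ℂ) * (x:ℂ) ^ 2 - 2 * π * Complex.I * ξ * x).re =
          -(δseq n * x ^ 2) := by
        simp only [pow_two, Complex.sub_re, Complex.mul_re, Complex.mul_im, Complex.add_re,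
          Complex.add_im, Complex.ofReal_re, Complex.ofReal_im, Complex.I_re, Complex.I_im,
          Complex.neg_re, Complex.neg_im, Complex.re_ofNat, Complex.im_ofNat]
        ring
      rw [hre]
      calc ‖L x‖ * Real.exp (-(δseq n * x ^ 2))
          ≤ ‖L x‖ * 1 := by
            refine mul_le_mul_of_nonneg_left ?_ (norm_nonneg _)
            rw [Real.exp_le_one_iff]
            have := hδpos n
            nlinarith [sq_nonneg x]
      _ = ‖L x‖ := mul_one _
    · filter_upwards with x
      rw [hGdef]
      have hcont : Continuous fun d : ℝ =>
          L x * Complex.exp (-(d:ℂ) * (x:ℂ) ^ 2 - 2 * π * Complex.I * ξ * x) := by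
        apply continuous_const.mul
        apply Complex.continuous_exp.comp
        fun_prop
      have := (hcont.tendsto 0).comp hδto0
      simpa [Function.comp_def] using this
  -- ∫ G (δseq n) tendsto 0
  have hzero : Tendsto (fun n => ∫ x : ℝ, G (δseq n) x) atTop (nhds 0) := by
    refine squeeze_zero_norm' (a := fun n : ℕ =>
      (K * Real.sqrt (2 * π / b)) * (((n:ℝ) + 1) ^ (1/2 : ℝ) * Real.exp (-(b/2) * ((n:ℝ) + 1)))) ?_ ?_
    · filter_upwards with n
      have hy : (0:ℝ) ≤ (n:ℝ) + 1 := by positivity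
      have h1 := hval (δseq n) (hδpos n) ((n:ℝ) + 1) hy
      refine h1.trans (le_of_eq ?_)
      have harg : -b * ((n:ℝ) + 1) + δseq n * ((n:ℝ) + 1) ^ 2 = -(b / 2) * ((n:ℝ) + 1) := by
        rw [hδseq]
        field_simp
        ring
      have hsqrt : Real.sqrt (π / δseq n) =
          Real.sqrt (2 * π / b) * ((n:ℝ) + 1) ^ (1/2 : ℝ) := by
        rw [hδseq]
        rw [show π / (b / (2 * ((n:ℝ) + 1))) = (2 * π / b) * ((n:ℝ) + 1) by field_simp]
        rw [Real.sqrt_mul (by positivity), Real.sqrt_eq_rpow ((n:ℝ)+1)]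
      rw [harg, hsqrt]
      ring
    · have hmain := tendsto_rpow_mul_exp_neg_mul_atTop_nhds_zero (1/2) (b/2) (half_pos hb)
      have hcomp : Tendsto (fun n : ℕ => ((n:ℝ) + 1)) atTop atTop :=
        tendsto_atTop_add_const_right atTop 1 tendsto_natCast_atTop_atTop
      have := (hmain.comp hcomp).const_mul (K * Real.sqrt (2 * π / b))
      simp only [mul_zero] at this
      refine this.congr fun n => ?_
      simp only [Function.comp_apply]
  have hfin := tendsto_nhds_unique hJ hzero
  rw [Real.fourier_real_eq_integral_exp_smul]
  rw [← hfin]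
  apply MeasureTheory.integral_congr_ae
  filter_upwards with v
  rw [smul_eq_mul, mul_comm]
  congr 1
  push_cast
  ring

lemma FL_eq {L : ℂ → ℂ} (ξ : ℝ) :
    𝓕 (fun x : ℝ => L x) ξ = ∫ t : ℝ, L t * Complex.exp (-(2 * π * Complex.I * ξ * t)) := by
  rw [Real.fourier_real_eq_integral_exp_smul]
  apply MeasureTheory.integral_congr_ae
  filter_upwards with v
  rw [smul_eq_mul, mul_comm]
  congr 1
  push_cast
  ring

lemma fourier_vanish {L : ℂ → ℂ} {τ : ℝ} (hL : Differentiable ℂ L) (htype : ExpTypeLE L τ)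
    (hL1 : Integrable (fun x : ℝ => L x)) (hL'1 : Integrable (fun x : ℝ => deriv L x)) :
    ∀ ξ : ℝ, τ / (2 * π) ≤ |ξ| → 𝓕 (fun x : ℝ => L x) ξ = 0 := by
  have h2π : (0:ℝ) < 2 * π := by positivity
  set M : ℝ := ∫ x : ℝ, (‖L x‖ + ‖deriv L x‖) with hM
  have hMb : ∀ x : ℝ, ‖L x‖ ≤ M := global_bound hL hL1 hL'1
  -- vanishing on the negative open side
  have hneg : ∀ ξ : ℝ, ξ < -(τ / (2 * π)) → 𝓕 (fun x : ℝ => L x) ξ = 0 := by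
    intro ξ hξ
    refine vanish_neg hL htype hMb hL1 ?_
    rw [neg_div' , lt_div_iff₀ h2π] at hξ
    · linarith
  -- vanishing on the positive open side via reflection
  have hpos : ∀ ξ : ℝ, τ / (2 * π) < ξ → 𝓕 (fun x : ℝ => L x) ξ = 0 := by
    intro ξ hξ
    have hξ' : 2 * π * (-ξ) + τ < 0 := by
      rw [div_lt_iff₀ h2π] at hξ
      linarith
    have hLneg : Differentiable ℂ (fun z : ℂ => L (-z)) := hL.comp (differentiable_id.neg)
    have htypeneg : ExpTypeLE (fun z : ℂ => L (-z)) τ := by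
      intro ε hε
      obtain ⟨C, hC⟩ := htype ε hε
      exact ⟨C, fun z => by simpa [norm_neg] using hC (-z)⟩
    have hMneg : ∀ x : ℝ, ‖(fun z : ℂ => L (-z)) x‖ ≤ M := fun x => by
      have := hMb (-x)
      simpa [Complex.ofReal_neg] using this
    have hL1neg : Integrable (fun x : ℝ => (fun z : ℂ => L (-z)) x) := by
      have := hL1.comp_neg
      refine this.congr ?_
      filter_upwards with x
      simp [Complex.ofReal_neg]
    have h0 := vanish_neg hLneg htypeneg hMneg hL1neg hξ'
    -- 𝓕 (L ∘ neg) (-ξ) = 𝓕 L ξ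
    have hflip : ∀ w : ℝ, 𝓕 (fun x : ℝ => L (-(x:ℝ))) w = 𝓕 (fun x : ℝ => L x) (-w) := by
      intro w
      have h1 := Real.fourierInv_eq_fourier_comp_neg (f := fun x : ℝ => L x)
      have h2 := Real.fourierInv_eq_fourier_neg (f := fun x : ℝ => L x) w
      rw [← h2, h1]
      simp [Complex.ofReal_neg]
    have := (hflip (-ξ)).symm.trans h0
    simpa using this
  -- closure argument
  have hcont : Continuous (𝓕 (fun x : ℝ => L x)) :=
    VectorFourier.fourierIntegral_continuous Real.continuous_fourierChar
      (by exact continuous_inner) hL1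
  have hclosed : IsClosed {ξ : ℝ | 𝓕 (fun x : ℝ => L x) ξ = 0} :=
    isClosed_eq hcont continuous_const
  have hIic : Set.Iic (-(τ / (2 * π))) ⊆ {ξ : ℝ | 𝓕 (fun x : ℝ => L x) ξ = 0} := by
    have h1 : Set.Iio (-(τ / (2 * π))) ⊆ {ξ : ℝ | 𝓕 (fun x : ℝ => L x) ξ = 0} :=
      fun ξ hξ => hneg ξ hξ
    calc Set.Iic (-(τ / (2 * π))) = closure (Set.Iio (-(τ / (2 * π)))) := (closure_Iio _).symm
    _ ⊆ closure {ξ : ℝ | 𝓕 (fun x : ℝ => L x) ξ = 0} := closure_mono h1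
    _ = _ := hclosed.closure_eq
  have hIci : Set.Ici (τ / (2 * π)) ⊆ {ξ : ℝ | 𝓕 (fun x : ℝ => L x) ξ = 0} := by
    have h1 : Set.Ioi (τ / (2 * π)) ⊆ {ξ : ℝ | 𝓕 (fun x : ℝ => L x) ξ = 0} :=
      fun ξ hξ => hpos ξ hξ
    calc Set.Ici (τ / (2 * π)) = closure (Set.Ioi (τ / (2 * π))) := (closure_Ioi _).symm
    _ ⊆ closure {ξ : ℝ | 𝓕 (fun x : ℝ => L x) ξ = 0} := closure_mono h1
    _ = _ := hclosed.closure_eq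
  intro ξ hξ
  rcases le_abs.mp hξ with h | h
  · exact hIci (Set.mem_Ici.mpr h)
  · exact hIic (Set.mem_Iic.mpr (by linarith))

/-- Let `L : ℂ → ℂ` be an entire function of exponential type at most
`τ` with `L` and `L'` both integrable on `ℝ`.  Then the periodization `Σ_{n∈ℤ} L(x+n)`
converges for every real `x` and equals the trigonometric polynomial
`Σ_{|k| < τ/(2π)} L̂(k) e(kx)`, where `L̂(t) = ∫ L(x) e(-tx) dx`. -/
theorem stmt18 (τ : ℝ) (L : ℂ → ℂ) (hL : Differentiable ℂ L)
    (htype : ExpTypeLE L τ)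
    (hL1 : MeasureTheory.Integrable (fun x : ℝ => L x))
    (hL'1 : MeasureTheory.Integrable (fun x : ℝ => deriv L x)) :
    ∀ x : ℝ, Summable (fun n : ℤ => L ((x : ℂ) + (n : ℂ))) ∧
      (∑' n : ℤ, L ((x : ℂ) + (n : ℂ))) =
        ∑' k : ℤ, (if |(k : ℝ)| < τ / (2 * Real.pi) then
          (∫ t : ℝ, L t * Complex.exp (-(2 * Real.pi * Complex.I * k * t))) *
            Complex.exp (2 * Real.pi * Complex.I * k * x) else 0) := by
  intro x
  set f : C(ℝ, ℂ) := ⟨fun x : ℝ => L x, hL.continuous.comp Complex.continuous_ofReal⟩ with hf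
  have hnorm := h_norm_aux hL hL1 hL'1
  have hvanish := fourier_vanish hL htype hL1 hL'1
  -- summability of the periodization
  have hsummand : Summable (fun n : ℤ => L ((x:ℂ) + (n:ℂ))) := by
    have h1 := hnorm ⟨{x}, isCompact_singleton⟩
    refine Summable.of_norm ?_
    refine Summable.of_nonneg_of_le (fun n => norm_nonneg _) (fun n => ?_) h1
    have hmem : x ∈ ({x} : Set ℝ) := rfl
    have h2 := ContinuousMap.norm_coe_le_norm
      ((f.comp (ContinuousMap.addRight ((n : ℤ) : ℝ))).restrict
        (↑(⟨{x}, isCompact_singleton⟩ : TopologicalSpace.Compacts ℝ))) ⟨x, hmem⟩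
    simpa [hf, ContinuousMap.restrict_apply, ContinuousMap.comp_apply,
      ContinuousMap.coe_addRight, Complex.ofReal_add, Complex.ofReal_intCast] using h2
  refine ⟨hsummand, ?_⟩
  -- summability of the Fourier side
  have hsum : Summable fun n : ℤ => 𝓕 (⇑f) (n : ℝ) := by
    set N : ℕ := ⌈τ / (2 * π)⌉₊ with hN
    refine summable_of_ne_finset_zero (s := Finset.Icc (-(N:ℤ)) N) fun k hk => ?_
    refine hvanish _ ?_
    simp only [Finset.mem_Icc, not_and_or, not_le] at hk
    have hNk : (N : ℝ) < |(k : ℝ)| := by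
      rcases hk with h | h
      · have : (k:ℝ) < -(N:ℝ) := by exact_mod_cast h
        rw [abs_of_neg (by linarith [Nat.cast_nonneg (α := ℝ) N])]
        linarith
      · have : (N:ℝ) < (k:ℝ) := by exact_mod_cast h
        rw [abs_of_pos (by linarith [Nat.cast_nonneg (α := ℝ) N])]
        linarith
    exact le_trans (Nat.le_ceil _) hNk.le
  have poisson := Real.tsum_eq_tsum_fourier hnorm hsum x
  -- rewrite the left side
  have hleft : (∑' n : ℤ, L ((x:ℂ) + (n:ℂ))) = ∑' n : ℤ, f (x + (n:ℝ)) := by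
    refine tsum_congr fun n => ?_
    simp [hf]
  rw [hleft, poisson]
  -- termwise identification of the right side
  refine tsum_congr fun k => ?_
  by_cases hk : |(k:ℝ)| < τ / (2 * π)
  · rw [if_pos hk]
    have h1 : 𝓕 (⇑f) ((k:ℤ) : ℝ) =
        ∫ t : ℝ, L t * Complex.exp (-(2 * π * Complex.I * (k:ℂ) * t)) := by
      rw [show (⇑f : ℝ → ℂ) = fun x : ℝ => L x from rfl, FL_eq ((k:ℤ) : ℝ)]
      apply MeasureTheory.integral_congr_ae
      filter_upwards with t
      norm_cast
    have h2 : (fourier k (x : UnitAddCircle) : ℂ) =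
        Complex.exp (2 * π * Complex.I * (k:ℂ) * x) := by
      rw [fourier_coe_apply]
      norm_num
    rw [h1, h2]
  · rw [if_neg hk]
    have h0 : 𝓕 (⇑f) ((k:ℤ) : ℝ) = 0 := hvanish _ (not_lt.mp hk)
    rw [h0, zero_mul]
end
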